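/- arXiv:1609.03226 — 6 statements merged into one kernel-verified Lean document; each statement's English description precedes it below -/
import Mathlib

section
/- For $1 < r < \infty$ let $\theta_2^* \in [0,\pi/2)$, and define $\theta_r^* = \arctan\frac{\sqrt{(r-2)^2 + r^2 (\tan\theta_2^*)^2}}{2\sqrt{r-1}}$, $\theta_r = \pi/2 - \theta_r^*$, and $\phi_r = \arccos|1 - 2/r|$. Then $\sin\theta_r = \sin\phi_r \cdot \sin\theta_2$, where $\theta_2 = \pi/2 - \theta_2^*$. -/
open Real

theorem stmt_1 (r θ2s : ℝ) (hr : 1 < r) (hθ2 : θ2s ∈ Set.Ico 0 (π/2)) :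
    sin (π/2 - arctan (Real.sqrt ((r-2)^2 + r^2 * (tan θ2s)^2) / (2 * Real.sqrt (r-1))))
      = sin (arccos |1 - 2/r|) * sin (π/2 - θ2s) := by
  obtain ⟨h0, h1⟩ := hθ2
  have hr1 : (0:ℝ) < r - 1 := by linarith
  have hr0 : (0:ℝ) < r := by linarith
  have hc : 0 < cos θ2s := by
    apply Real.cos_pos_of_mem_Ioo
    constructor
    · linarith [Real.pi_pos]
    · exact h1
  have hs : (0:ℝ) < Real.sqrt (r-1) := Real.sqrt_pos.mpr hr1
  have hA : (0:ℝ) ≤ (r-2)^2 + r^2 * (tan θ2s)^2 := by positivity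
  have htan : tan θ2s * cos θ2s = sin θ2s := Real.tan_mul_cos hc.ne'
  have hsin2 : sin θ2s ^ 2 = 1 - cos θ2s ^ 2 := Real.sin_sq θ2s
  rw [Real.sin_pi_div_two_sub, Real.sin_pi_div_two_sub, Real.cos_arctan, Real.sin_arccos]
  have key : 1 + (Real.sqrt ((r-2)^2 + r^2 * (tan θ2s)^2) / (2 * Real.sqrt (r-1)))^2
      = (r / (2 * Real.sqrt (r-1) * cos θ2s))^2 := by
    rw [div_pow, div_pow, Real.sq_sqrt hA]
    have h2 : (2 * Real.sqrt (r-1))^2 = 4 * (r-1) := by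
      rw [mul_pow, Real.sq_sqrt hr1.le]; ring
    have h3 : (2 * Real.sqrt (r-1) * cos θ2s)^2 = 4 * (r-1) * cos θ2s ^ 2 := by
      rw [mul_pow, h2]
    rw [h2, h3]
    have htan2 : tan θ2s ^ 2 * cos θ2s ^ 2 = 1 - cos θ2s ^ 2 := by
      rw [← hsin2, ← htan]; ring
    field_simp
    linear_combination r^2 * htan2
  rw [key, Real.sqrt_sq (by positivity)]
  have habs : 1 - |1 - 2/r|^2 = (2 * Real.sqrt (r-1) / r)^2 := by
    rw [sq_abs, div_pow, mul_pow, Real.sq_sqrt hr1.le]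
    field_simp
    ring
  rw [habs, Real.sqrt_sq (by positivity)]
  field_simp
end

section
/- For $r \in (1,\infty)\setminus\{2\}$ and $\theta_2^* \in [0,\pi/2)$ with $\theta_2 = \pi/2 - \theta_2^*$, the angle $\theta_r^* = \arctan\frac{\sqrt{(r-2)^2 + r^2(\tan\theta_2^*)^2}}{2\sqrt{r-1}}$ satisfies the strict inequality $\theta_r^* < \theta_2^* + \theta_2\,|1 - 2/r|$. -/
open Real

theorem sinc_lt_aux {x y : ℝ} (hx : 0 < x) (hxy : x < y) (hy : y ≤ π) :
    sin y * x < sin x * y := by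
  have h1 : StrictAntiOn (fun t : ℝ => sin t / t) (Set.Icc x y) := by
    apply strictAntiOn_of_deriv_neg (convex_Icc x y)
    · exact (Real.continuous_sin.continuousOn.div continuousOn_id
        (fun t ht => ne_of_gt (lt_of_lt_of_le hx ht.1)))
    · intro t ht
      rw [interior_Icc] at ht
      have ht0 : 0 < t := hx.trans ht.1
      have hd : HasDerivAt (fun t : ℝ => sin t / t) ((cos t * t - sin t * 1) / t ^ 2) t :=
        (Real.hasDerivAt_sin t).div (hasDerivAt_id t) (ne_of_gt ht0)
      rw [hd.deriv]
      have htπ : t < π := lt_of_lt_of_le ht.2 hy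
      have hnum : cos t * t - sin t * 1 < 0 := by
        have hsin : 0 < sin t := Real.sin_pos_of_pos_of_lt_pi ht0 htπ
        rcases le_or_gt (π/2) t with h | h
        · have : cos t ≤ 0 := Real.cos_nonpos_of_pi_div_two_le_of_le h (by linarith [Real.pi_pos])
          nlinarith
        · have htan := Real.lt_tan ht0 h
          rw [Real.tan_eq_sin_div_cos] at htan
          have hc : 0 < cos t := Real.cos_pos_of_mem_Ioo ⟨by linarith, h⟩
          rw [lt_div_iff₀ hc] at htan
          nlinarith
      exact div_neg_of_neg_of_pos hnum (by positivity)
  have := h1 (Set.left_mem_Icc.mpr hxy.le) (Set.right_mem_Icc.mpr hxy.le) hxy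
  simp only at this
  have hy0 : 0 < y := hx.trans hxy
  rw [div_lt_div_iff₀ hy0 hx] at this
  linarith

theorem ratio_lt_aux {b φ : ℝ} (hb0 : 0 < b) (hb1 : b < 1) (hφ0 : 0 < φ) (hφ : φ < π/2) :
    sin (b*φ) < sin (b*(π/2)) * sin φ := by
  have hπ := Real.pi_pos
  have h1 : StrictMonoOn (fun t : ℝ => sin (b*t) / sin t) (Set.Icc φ (π/2)) := by
    apply strictMonoOn_of_deriv_pos (convex_Icc _ _)
    · apply ContinuousOn.div
      · exact (Real.continuous_sin.comp (continuous_const.mul continuous_id)).continuousOn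
      · exact Real.continuous_sin.continuousOn
      · intro t ht
        exact ne_of_gt (Real.sin_pos_of_pos_of_lt_pi (hφ0.trans_le ht.1) (by linarith [ht.2]))
    · intro t ht
      rw [interior_Icc] at ht
      have ht0 : 0 < t := hφ0.trans ht.1
      have htπ : t < π/2 := ht.2
      have hsint : 0 < sin t := Real.sin_pos_of_pos_of_lt_pi ht0 (by linarith)
      have hd : HasDerivAt (fun t : ℝ => sin (b*t) / sin t)
          ((cos (b*t) * b * sin t - sin (b*t) * cos t) / sin t ^ 2) t := by
        have h2 : HasDerivAt (fun t : ℝ => sin (b*t)) (cos (b*t) * b) t := by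
          have := (Real.hasDerivAt_sin (b*t)).comp t ((hasDerivAt_id t).const_mul b)
          simpa [mul_comm, Function.comp_def] using this
        exact h2.div (Real.hasDerivAt_sin t) (ne_of_gt hsint)
      rw [hd.deriv]
      apply div_pos _ (by positivity)
      have hu : sin ((1+b)*t) = sin t * cos (b*t) + cos t * sin (b*t) := by
        rw [show (1+b)*t = t + b*t by ring, Real.sin_add]
      have hv : sin ((1-b)*t) = sin t * cos (b*t) - cos t * sin (b*t) := by
        rw [show (1-b)*t = t - b*t by ring, Real.sin_sub]
      have hs := sinc_lt_aux (x := (1-b)*t) (y := (1+b)*t)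
        (by nlinarith) (by nlinarith) (by nlinarith)
      rw [hu, hv] at hs
      have h3 : 0 < 2*t*(cos (b*t) * b * sin t - sin (b*t) * cos t) := by nlinarith [hs]
      nlinarith [h3, ht0]
  have h2 := h1 (Set.left_mem_Icc.mpr (by linarith)) (Set.right_mem_Icc.mpr (by linarith)) hφ
  simp only [Real.sin_pi_div_two, div_one] at h2
  have hsφ : 0 < sin φ := Real.sin_pos_of_pos_of_lt_pi hφ0 (by linarith)
  rw [div_lt_iff₀ hsφ] at h2
  exact h2

theorem endpoint_lt_aux {b : ℝ} (hb0 : 0 < b) (hb1 : b < 1) :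
    sin (b*(π/2)) < Real.sqrt (b*(2-b)) := by
  have hπl : 3.14 < π := Real.pi_gt_d2
  have hπu : π < 3.15 := Real.pi_lt_d2
  have hπ2 : π^2 < 9.9225 := by nlinarith
  have hbπ : 0 < b*(π/2) := by nlinarith
  have hs0 : 0 ≤ sin (b*(π/2)) := by
    apply Real.sin_nonneg_of_nonneg_of_le_pi hbπ.le; nlinarith
  rw [Real.lt_sqrt hs0]
  rcases le_or_gt b (1/2) with hb | hb
  · have h1 : sin (b*(π/2)) < b*(π/2) := Real.sin_lt hbπ
    have h2 : sin (b*(π/2))^2 < (b*(π/2))^2 := by nlinarith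
    have k2 : 0 ≤ b*b*(9.9225 - π^2) := mul_nonneg (mul_nonneg hb0.le hb0.le) (by linarith)
    have k3 : 0 ≤ (1/2 - b)*b := mul_nonneg (by linarith) hb0.le
    nlinarith [h2, k2, k3]
  · set s : ℝ := 1 - b with hs
    have hs0' : 0 < s := by simp only [hs]; linarith
    have hs1 : s < 1/2 := by simp only [hs]; linarith
    have heq : sin (b*(π/2)) = cos (s*(π/2)) := by
      rw [show b*(π/2) = π/2 - s*(π/2) by simp only [hs]; ring]
      exact Real.sin_pi_div_two_sub _
    have hπ3 : π^3 < 31.26 := by nlinarith [Real.pi_pos]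
    have hx0 : 0 < s*(π/2) := by nlinarith
    have hx1 : s*(π/2) ≤ 1 := by nlinarith
    have h3 : s*(π/2) - (s*(π/2))^3/4 < sin (s*(π/2)) := by
      have := Real.sin_gt_sub_cube hx0; nlinarith [pow_pos hx0 3]
    have hs3 : s^3 ≤ s/4 := by nlinarith [mul_nonneg hs0'.le (by nlinarith : (0:ℝ) ≤ 1/4 - s^2)]
    have c1 : s^3 * π^3 ≤ (s/4) * 31.26 := by
      have := mul_le_mul hs3 hπ3.le (by positivity) (by linarith)
      linarith
    have hcube : (s*(π/2))^3 = s^3*π^3/8 := by ring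
    have h4 : s < sin (s*(π/2)) := by
      rw [hcube] at h3
      have hmul : 3.14 * s ≤ π * s := mul_le_mul_of_nonneg_right hπl.le hs0'.le
      linarith [h3, c1, hmul]
    have h5 := Real.sin_sq_add_cos_sq (s*(π/2))
    have h6 : s^2 < sin (s*(π/2))^2 := by
      rw [pow_two, pow_two]; exact mul_lt_mul'' h4 h4 hs0'.le hs0'.le
    have hb2 : b*(2-b) = 1 - s^2 := by rw [hs]; ring
    rw [heq]
    linarith [h5, h6, hb2]

theorem KL_aux {b φ : ℝ} (hb0 : 0 < b) (hb1 : b < 1) (hφ0 : 0 < φ) (hφ : φ ≤ π/2) :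
    sin (b*φ) < Real.sqrt (b*(2-b)) * sin φ := by
  rcases eq_or_lt_of_le hφ with h | h
  · rw [h, Real.sin_pi_div_two, mul_one]; exact endpoint_lt_aux hb0 hb1
  · have h1 := ratio_lt_aux hb0 hb1 hφ0 h
    have h2 := endpoint_lt_aux hb0 hb1
    have hsφ : 0 < sin φ := Real.sin_pos_of_pos_of_lt_pi hφ0 (by linarith [Real.pi_pos])
    nlinarith

theorem main2_aux {a θ : ℝ} (ha0 : 0 < a) (ha1 : a < 1) (hθ0 : 0 ≤ θ) (hθ : θ < π/2) :
    arctan (Real.sqrt (a^2 + tan θ^2) / Real.sqrt (1 - a^2)) < θ + (π/2-θ)*a := by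
  have hπ := Real.pi_pos
  have hR0 : 0 < θ + (π/2-θ)*a := by nlinarith
  have hRπ : θ + (π/2-θ)*a < π/2 := by nlinarith
  have hcosR : 0 < cos (θ + (π/2-θ)*a) := Real.cos_pos_of_mem_Ioo ⟨by linarith, hRπ⟩
  have hsinR : 0 < sin (θ + (π/2-θ)*a) := Real.sin_pos_of_pos_of_lt_pi hR0 (by linarith)
  have hcosθ : 0 < cos θ := Real.cos_pos_of_mem_Ioo ⟨by linarith, hθ⟩
  have h1a : 0 < 1 - a^2 := by nlinarith
  have hsq1 : 0 < Real.sqrt (1-a^2) := Real.sqrt_pos.mpr h1a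
  -- key : cos R < sqrt(1-a^2) * cos θ
  have key : cos (θ + (π/2-θ)*a) < Real.sqrt (1-a^2) * cos θ := by
    have hKL := KL_aux (b := 1-a) (φ := π/2-θ) (by linarith) (by linarith)
      (by linarith) (by linarith)
    rw [show (1-a)*(2-(1-a)) = 1-a^2 by ring] at hKL
    have hcos_eq : cos (θ + (π/2-θ)*a) = sin ((1-a)*(π/2-θ)) := by
      rw [show θ + (π/2-θ)*a = π/2 - (1-a)*(π/2-θ) by ring, Real.cos_pi_div_two_sub]
    have hcosθ_eq : cos θ = sin (π/2 - θ) := (Real.sin_pi_div_two_sub θ).symm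
    rw [hcos_eq, hcosθ_eq]
    exact hKL
  have key2 : cos (θ + (π/2-θ)*a)^2 < (1-a^2) * cos θ^2 := by
    have h := mul_lt_mul'' key key hcosR.le hcosR.le
    rw [← pow_two, ← pow_two, mul_pow, Real.sq_sqrt h1a.le] at h
    exact h
  have htan2 : tan θ^2 * cos θ^2 = sin θ^2 := by
    rw [Real.tan_eq_sin_div_cos]; field_simp
  have htanR : Real.sqrt (a^2 + tan θ^2) / Real.sqrt (1 - a^2) < tan (θ + (π/2-θ)*a) := by
    rw [show tan (θ + (π/2-θ)*a) = sin (θ + (π/2-θ)*a) / cos (θ + (π/2-θ)*a) from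
      Real.tan_eq_sin_div_cos _, div_lt_div_iff₀ hsq1 hcosR]
    apply lt_of_pow_lt_pow_left₀ 2 (by positivity)
    rw [mul_pow, mul_pow, Real.sq_sqrt (by positivity), Real.sq_sqrt h1a.le]
    have e1 : (a^2 + tan θ^2) * cos (θ + (π/2-θ)*a)^2 * cos θ^2
        = (a^2*cos θ^2 + sin θ^2) * cos (θ + (π/2-θ)*a)^2 := by
      linear_combination cos (θ + (π/2-θ)*a)^2 * htan2
    have hg : ((a^2 + tan θ^2) * cos (θ + (π/2-θ)*a)^2) * cos θ^2
        < (sin (θ + (π/2-θ)*a)^2 * (1-a^2)) * cos θ^2 := by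
      nlinarith [key2, e1, Real.sin_sq_add_cos_sq θ, Real.sin_sq_add_cos_sq (θ + (π/2-θ)*a)]
    exact lt_of_mul_lt_mul_right hg (by positivity : (0:ℝ) ≤ cos θ^2)
  calc arctan (Real.sqrt (a^2 + tan θ^2) / Real.sqrt (1 - a^2))
      < arctan (tan (θ + (π/2-θ)*a)) := Real.arctan_strictMono htanR
    _ = θ + (π/2-θ)*a := Real.arctan_tan (by linarith) hRπ

theorem stmt_3 (r θ2s : ℝ) (hr : 1 < r) (hr2 : r ≠ 2) (hθ2 : θ2s ∈ Set.Ico 0 (π/2)) :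
    arctan (Real.sqrt ((r-2)^2 + r^2 * (tan θ2s)^2) / (2 * Real.sqrt (r-1)))
      < θ2s + (π/2 - θ2s) * |1 - 2/r| := by
  obtain ⟨hθ0, hθπ⟩ := hθ2
  have hr0 : 0 < r := by linarith
  have ha0 : 0 < |1 - 2/r| := by
    rw [abs_pos]
    intro h
    apply hr2
    field_simp at h
    linarith
  have ha1 : |1 - 2/r| < 1 := by
    rw [abs_lt]
    constructor
    · have h2r : 2/r < 2 := by rw [div_lt_iff₀ hr0]; linarith
      linarith
    · have : 0 < 2/r := by positivity
      linarith
  have hsr : 0 < Real.sqrt (r-1) := Real.sqrt_pos.mpr (by linarith)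
  have harg : Real.sqrt ((r-2)^2 + r^2 * (tan θ2s)^2) / (2 * Real.sqrt (r-1))
      = Real.sqrt (|1 - 2/r|^2 + tan θ2s^2) / Real.sqrt (1 - |1 - 2/r|^2) := by
    have e : 1 - |1 - 2/r|^2 = 4*(r-1)/r^2 := by rw [sq_abs]; field_simp; ring
    have h2 : (2*Real.sqrt (r-1)/r)^2 = 4*(r-1)/r^2 := by
      rw [div_pow, mul_pow, Real.sq_sqrt (by linarith : (0:ℝ) ≤ r-1)]
      ring
    have h1 : Real.sqrt (1 - |1 - 2/r|^2) = 2*Real.sqrt (r-1)/r := by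
      rw [e, ← h2, Real.sqrt_sq (by positivity)]
    have e2 : |1 - 2/r|^2 + tan θ2s^2 = ((r-2)^2 + r^2*(tan θ2s)^2)/r^2 := by
      rw [sq_abs]; field_simp
    have h3 : Real.sqrt (|1 - 2/r|^2 + tan θ2s^2)
        = Real.sqrt ((r-2)^2 + r^2*(tan θ2s)^2)/r := by
      rw [e2, Real.sqrt_div (by positivity), Real.sqrt_sq hr0.le]
    rw [h1, h3]
    field_simp
  rw [harg]
  exact main2_aux ha0 ha1 hθ0 hθπ
end

section
/- Let $\mathcal{H}$ be a complex Hilbert space and $B$ a bounded strictly accretive operator on $\mathcal{H}$, i.e., $\Re\langle B\xi,\xi\rangle \geq \lambda\|\xi\|^2$ for some $\lambda>0$. Let $B_s = (B+B^*)/2$ and $B_a = (B-B^*)/2$. Then the smallest angle $\theta_2^* \in [0,\pi/2)$ such that $|\Im\langle B\xi,\xi\rangle| \leq \tan\theta_2^* \cdot \Re\langle B\xi,\xi\rangle$ for all $\xi$ satisfies $\tan\theta_2^* = \|B_s^{-1/2} B_a B_s^{-1/2}\|$. -/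
open Real ContinuousLinearMap
open scoped ComplexInnerProductSpace

/-- For a self-adjoint operator, the norm is bounded by any bound on the
numerical radius (proved via polarization). -/
lemma sa_norm_le_aux {H : Type*} [NormedAddCommGroup H] [InnerProductSpace ℂ H]
    [CompleteSpace H] (A : H →L[ℂ] H) (hA : ContinuousLinearMap.adjoint A = A)
    (c : ℝ) (hc : 0 ≤ c) (h : ∀ x : H, |(⟪A x, x⟫).re| ≤ c * ‖x‖ ^ 2) : ‖A‖ ≤ c := by
  refine A.opNorm_le_bound hc fun x => ?_
  rcases eq_or_ne (A x) 0 with hAx | hAx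
  · simp only [hAx, norm_zero]
    positivity
  have hx : x ≠ 0 := by rintro rfl; simp at hAx
  have hxn : (0:ℝ) < ‖x‖ := norm_pos_iff.mpr hx
  have hAxn : (0:ℝ) < ‖A x‖ := norm_pos_iff.mpr hAx
  set y : H := ((‖x‖ / ‖A x‖ : ℝ) : ℂ) • A x with hy
  have hadj : ∀ u v : H, ⟪A v, u⟫ = (starRingEnd ℂ) ⟪A u, v⟫ := by
    intro u v
    rw [inner_conj_symm]
    conv_lhs => rw [← hA]
    rw [adjoint_inner_left]
  have hpol : (⟪A (x + y), x + y⟫).re - (⟪A (x - y), x - y⟫).re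
      = 4 * (⟪A x, y⟫).re := by
    have e1 : ⟪A (x + y), x + y⟫ - ⟪A (x - y), x - y⟫
        = 2 * ⟪A x, y⟫ + 2 * ⟪A y, x⟫ := by
      simp only [map_add, map_sub, inner_add_left, inner_add_right,
        inner_sub_left, inner_sub_right]
      ring
    have e2 : ((⟪A (x + y), x + y⟫ : ℂ) - ⟪A (x - y), x - y⟫).re
        = 4 * (⟪A x, y⟫).re := by
      rw [e1, hadj x y]
      simp only [Complex.add_re, Complex.mul_re, Complex.re_ofNat, Complex.im_ofNat,
        Complex.conj_re, Complex.conj_im]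
      ring
    simpa [Complex.sub_re] using e2
  have hyx : ‖y‖ = ‖x‖ := by
    rw [hy, norm_smul]
    simp only [Complex.norm_real, Real.norm_eq_abs, abs_div, abs_of_nonneg (norm_nonneg x),
      abs_of_nonneg (norm_nonneg (A x))]
    field_simp
  have hip : (⟪A x, y⟫).re = ‖x‖ * ‖A x‖ := by
    rw [hy, inner_smul_right, Complex.mul_re, Complex.ofReal_re, Complex.ofReal_im]
    have h1 : (⟪A x, A x⟫ : ℂ).re = ‖A x‖ ^ 2 := by
      have := inner_self_eq_norm_sq (𝕜 := ℂ) (A x)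
      simpa using this
    have h2 : (⟪A x, A x⟫ : ℂ).im = 0 := by
      have := inner_self_im (𝕜 := ℂ) (A x)
      rwa [RCLike.im_to_complex] at this
    rw [h1, h2]
    field_simp
    ring
  have hparallel : ‖x + y‖ * ‖x + y‖ + ‖x - y‖ * ‖x - y‖
      = 2 * (‖x‖ * ‖x‖ + ‖y‖ * ‖y‖) := by
    simpa only [sq] using parallelogram_law_with_norm ℂ x y
  have h1 := h (x + y)
  have h2 := h (x - y)
  have hb1 : (⟪A (x + y), x + y⟫).re ≤ c * ‖x + y‖ ^ 2 := (abs_le.mp h1).2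
  have hb2 : -(c * ‖x - y‖ ^ 2) ≤ (⟪A (x - y), x - y⟫).re := (abs_le.mp h2).1
  have hp2 : ‖x + y‖ ^ 2 + ‖x - y‖ ^ 2 = 4 * ‖x‖ ^ 2 := by
    rw [hyx] at hparallel
    rw [pow_two, pow_two, pow_two]
    linarith
  have key : ‖x‖ * ‖A x‖ ≤ c * ‖x‖ ^ 2 := by nlinarith [hp2, hpol, hb1, hb2, hip, hc]
  nlinarith [key, hxn, hAxn]

/-- For a skew-adjoint operator, the norm is bounded by any bound on the
numerical radius. -/
lemma skew_norm_le_aux {H : Type*} [NormedAddCommGroup H] [InnerProductSpace ℂ H]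
    [CompleteSpace H] (T : H →L[ℂ] H) (hT : ContinuousLinearMap.adjoint T = -T)
    (c : ℝ) (hc : 0 ≤ c) (h : ∀ x : H, |(⟪T x, x⟫).im| ≤ c * ‖x‖ ^ 2) : ‖T‖ ≤ c := by
  set A : H →L[ℂ] H := Complex.I • T with hAdef
  have hA : ContinuousLinearMap.adjoint A = A := by
    rw [hAdef, ← star_eq_adjoint, star_smul, star_eq_adjoint, hT]
    simp [Complex.star_def, Complex.conj_I]
  have hnorm : ‖A‖ = ‖T‖ := by
    rw [hAdef, norm_smul, Complex.norm_I, one_mul]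
  rw [← hnorm]
  refine sa_norm_le_aux A hA c hc fun x => ?_
  have : |(⟪A x, x⟫).re| = |(⟪T x, x⟫).im| := by
    rw [hAdef]
    simp only [smul_apply, inner_smul_left, Complex.conj_I, Complex.mul_re,
      Complex.neg_re, Complex.neg_im, Complex.I_re, Complex.I_im]
    ring_nf
  rw [this]
  exact h x

theorem stmt_4 {H : Type*} [NormedAddCommGroup H] [InnerProductSpace ℂ H] [CompleteSpace H]
    (B S : H →L[ℂ] H) (lam : ℝ) (hlam : 0 < lam)
    (hacc : ∀ ξ : H, lam * ‖ξ‖^2 ≤ (⟪B ξ, ξ⟫).re)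
    (θ2s : ℝ) (hθmem : θ2s ∈ Set.Ico 0 (π/2))
    (hθ : ∀ ξ : H, |(⟪B ξ, ξ⟫).im| ≤ tan θ2s * (⟪B ξ, ξ⟫).re)
    (hmin : ∀ θ' ∈ Set.Ico (0:ℝ) (π/2),
      (∀ ξ : H, |(⟪B ξ, ξ⟫).im| ≤ tan θ' * (⟪B ξ, ξ⟫).re) → θ2s ≤ θ')
    -- `S` is the positive square root of the inverse of `B_s = (B+B^*)/2`
    (hSsa : IsSelfAdjoint S) (hSpos : ∀ ξ : H, 0 ≤ (⟪S ξ, ξ⟫).re)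
    (hSinv₁ : (S ∘L S) ∘L ((1/2 : ℂ) • (B + adjoint B)) = 1)
    (hSinv₂ : ((1/2 : ℂ) • (B + adjoint B)) ∘L (S ∘L S) = 1) :
    tan θ2s = ‖S ∘L ((1/2 : ℂ) • (B - adjoint B)) ∘L S‖ := by
  have hSadj : ContinuousLinearMap.adjoint S = S := by
    rw [← star_eq_adjoint]; exact hSsa.star_eq
  set Bs : H →L[ℂ] H := (1/2 : ℂ) • (B + adjoint B) with hBsdef
  set Ba : H →L[ℂ] H := (1/2 : ℂ) • (B - adjoint B) with hBadef
  set T : H →L[ℂ] H := S ∘L Ba ∘L S with hTdef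
  -- pointwise inverse identities
  have e₁ : ∀ x : H, S (S (Bs x)) = x := by
    intro x
    have := DFunLike.congr_fun hSinv₁ x
    simpa using this
  have e₂ : ∀ x : H, Bs (S (S x)) = x := by
    intro x
    have := DFunLike.congr_fun hSinv₂ x
    simpa using this
  have hη : ∀ η : H, S (Bs (S η)) = η := by
    intro η
    calc S (Bs (S η)) = S (Bs (S (S (S (Bs η))))) := by rw [e₁]
      _ = S (S (Bs η)) := by rw [e₂ (S (Bs η))]
      _ = η := e₁ η
  -- adjoints
  have hBa_adj : ContinuousLinearMap.adjoint Ba = -Ba := by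
    rw [hBadef, ← star_eq_adjoint, star_smul, star_sub, star_eq_adjoint, star_eq_adjoint,
      adjoint_adjoint]
    simp [Complex.star_def]
    module
  have hT_adj : ContinuousLinearMap.adjoint T = -T := by
    rw [hTdef, adjoint_comp, adjoint_comp, hBa_adj, hSadj]
    ext x; simp
  -- the real and imaginary parts of ⟪B (S η), S η⟫
  have hBs_inner : ∀ ξ : H, (⟪Bs ξ, ξ⟫ : ℂ) = ((⟪B ξ, ξ⟫).re : ℂ) := by
    intro ξ
    have hconj : ⟪(ContinuousLinearMap.adjoint B) ξ, ξ⟫ = (starRingEnd ℂ) ⟪B ξ, ξ⟫ := by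
      rw [adjoint_inner_left, inner_conj_symm]
    rw [hBsdef]
    simp only [smul_apply, add_apply, inner_smul_left, inner_add_left, hconj]
    rw [Complex.add_conj]
    simp only [map_div₀, map_one, map_ofNat]
    push_cast
    ring
  have hBa_inner : ∀ ξ : H, (⟪Ba ξ, ξ⟫ : ℂ) = Complex.I * ((⟪B ξ, ξ⟫).im : ℂ) := by
    intro ξ
    have hconj : ⟪(ContinuousLinearMap.adjoint B) ξ, ξ⟫ = (starRingEnd ℂ) ⟪B ξ, ξ⟫ := by
      rw [adjoint_inner_left, inner_conj_symm]
    rw [hBadef]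
    simp only [smul_apply, sub_apply, inner_smul_left, inner_sub_left, hconj]
    rw [Complex.sub_conj]
    simp only [map_div₀, map_one, map_ofNat]
    push_cast
    ring
  have hSmove : ∀ u v : H, ⟪S u, v⟫ = ⟪u, S v⟫ := by
    intro u v
    have := adjoint_inner_left S v u
    rwa [hSadj] at this
  have hT_inner : ∀ η : H, (⟪T η, η⟫ : ℂ) = ⟪Ba (S η), S η⟫ := by
    intro η
    rw [hTdef]
    simp only [comp_apply]
    exact hSmove _ _
  have hre : ∀ η : H, (⟪B (S η), S η⟫).re = ‖η‖ ^ 2 := by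
    intro η
    have h1 : (⟪Bs (S η), S η⟫ : ℂ) = ⟪(η : H), η⟫ := by
      rw [← hSmove (Bs (S η)) η, hη]
    have h2 := hBs_inner (S η)
    rw [h1] at h2
    have h3 : (⟪(η : H), η⟫ : ℂ).re = ‖η‖ ^ 2 := by
      have := inner_self_eq_norm_sq (𝕜 := ℂ) η
      simpa using this
    have := congrArg Complex.re h2
    rw [Complex.ofReal_re] at this
    rw [← this, h3]
  have him : ∀ η : H, (⟪T η, η⟫).im = (⟪B (S η), S η⟫).im := by
    intro η
    rw [hT_inner η, hBa_inner (S η)]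
    simp
  -- Direction 1 : ‖T‖ ≤ tan θ2s
  have htan_nonneg : 0 ≤ tan θ2s :=
    tan_nonneg_of_nonneg_of_le_pi_div_two hθmem.1 hθmem.2.le
  have dir1 : ‖T‖ ≤ tan θ2s := by
    refine skew_norm_le_aux T hT_adj _ htan_nonneg fun η => ?_
    rw [him η]
    calc |(⟪B (S η), S η⟫).im| ≤ tan θ2s * (⟪B (S η), S η⟫).re := hθ (S η)
      _ = tan θ2s * ‖η‖ ^ 2 := by rw [hre η]
  -- Direction 2 : tan θ2s ≤ ‖T‖
  have dir2 : tan θ2s ≤ ‖T‖ := by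
    have hbound : ∀ ξ : H, |(⟪B ξ, ξ⟫).im| ≤ ‖T‖ * (⟪B ξ, ξ⟫).re := by
      intro ξ
      set η : H := Bs (S ξ) with hηdef
      have hSη : S η = ξ := hη ξ
      have h1 : (⟪B ξ, ξ⟫).im = (⟪T η, η⟫).im := by rw [← hSη]; exact (him η).symm
      have h2 : (⟪B ξ, ξ⟫).re = ‖η‖ ^ 2 := by rw [← hSη]; exact hre η
      rw [h1, h2]
      calc |(⟪T η, η⟫).im| ≤ ‖(⟪T η, η⟫ : ℂ)‖ := Complex.abs_im_le_norm _
        _ ≤ ‖T η‖ * ‖η‖ := norm_inner_le_norm _ _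
        _ ≤ (‖T‖ * ‖η‖) * ‖η‖ := by
            apply mul_le_mul_of_nonneg_right (T.le_opNorm η) (norm_nonneg η)
        _ = ‖T‖ * ‖η‖ ^ 2 := by ring
    have harctan0 : (0:ℝ) ≤ arctan ‖T‖ := by
      rw [← arctan_zero]
      exact arctan_strictMono.monotone (norm_nonneg T)
    have hθ'mem : arctan ‖T‖ ∈ Set.Ico (0:ℝ) (π/2) :=
      ⟨harctan0, arctan_lt_pi_div_two _⟩
    have hle : θ2s ≤ arctan ‖T‖ := by
      apply hmin _ hθ'mem
      intro ξ
      rw [tan_arctan]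
      exact hbound ξ
    have : tan θ2s ≤ tan (arctan ‖T‖) := by
      apply strictMonoOn_tan.monotoneOn
      · exact ⟨by linarith [hθmem.1, pi_pos], hθmem.2⟩
      · exact ⟨by linarith [harctan0, pi_pos], arctan_lt_pi_div_two _⟩
      · exact hle
    rwa [tan_arctan] at this
  exact le_antisymm dir2 dir1
end

section
/- With $\mathcal{Q}$ the Nazarov–Treil Bellman function with parameters $p\geq 2$, $q=p/(p-1)$, $\delta>0$, the function $\mathcal{Q}$ is continuously differentiable on $\mathbb{R}^4$ and its complex gradients satisfy $2|(\partial_\zeta\mathcal{Q})(\zeta,\eta)| \leq (p+2\delta)\max\{|\zeta|^{p-1},|\eta|\}$ and $2|(\partial_\eta\mathcal{Q})(\zeta,\eta)| \leq (q+(2-q)\delta)|\eta|^{q-1}$ for all $(\zeta,\eta)\in\mathbb{R}^2\times\mathbb{R}^2$. -/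
/-- The Nazarov–Treil Bellman function with parameters `p`, `q`, `δ`,
viewed as a function on `ℝ² × ℝ²` (i.e. on `ℝ⁴`). -/
noncomputable def NTBellman (p q δ : ℝ)
    (v : EuclideanSpace ℝ (Fin 2) × EuclideanSpace ℝ (Fin 2)) : ℝ :=
  if ‖v.1‖ ^ p ≤ ‖v.2‖ ^ q then
    ‖v.1‖ ^ p + ‖v.2‖ ^ q + δ * (‖v.1‖ ^ (2:ℝ) * ‖v.2‖ ^ (2 - q))
  else
    ‖v.1‖ ^ p + ‖v.2‖ ^ q + δ * (2/p * ‖v.1‖ ^ p + (2/q - 1) * ‖v.2‖ ^ q)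


open Real ContinuousLinearMap Asymptotics Topology

local notation "E2" => EuclideanSpace ℝ (Fin 2)
local notation "X2" => (EuclideanSpace ℝ (Fin 2)) × (EuclideanSpace ℝ (Fin 2))

namespace NTB

/-- squeeze lemma for derivatives -/
theorem hasFDerivAt_of_squeeze {E : Type*} [NormedAddCommGroup E] [NormedSpace ℝ E]
    {f g G : E → ℝ} {D : E →L[ℝ] ℝ} {x₀ : E}
    (hf : HasFDerivAt f D x₀) (hg : HasFDerivAt g D x₀)
    (hfx : f x₀ = G x₀) (hgx : g x₀ = G x₀)
    (h1 : ∀ x, f x ≤ G x) (h2 : ∀ x, G x ≤ g x) : HasFDerivAt G D x₀ := by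
  rw [hasFDerivAt_iff_isLittleO] at hf hg ⊢
  rw [hfx] at hf; rw [hgx] at hg
  have key : ∀ x, ‖G x - G x₀ - D (x - x₀)‖ ≤
      ‖(fun x => f x - G x₀ - D (x - x₀)) x‖ + ‖(fun x => g x - G x₀ - D (x - x₀)) x‖ := by
    intro x
    simp only [Real.norm_eq_abs]
    have h3 := h1 x; have h4 := h2 x
    have h5 : -|f x - G x₀ - D (x - x₀)| ≤ f x - G x₀ - D (x - x₀) := neg_abs_le _
    have h6 : g x - G x₀ - D (x - x₀) ≤ |g x - G x₀ - D (x - x₀)| := le_abs_self _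
    have h7 : (0:ℝ) ≤ |f x - G x₀ - D (x - x₀)| := abs_nonneg _
    have h8 : (0:ℝ) ≤ |g x - G x₀ - D (x - x₀)| := abs_nonneg _
    rw [abs_le]; constructor <;> nlinarith
  refine (Asymptotics.isBigO_of_le _ (fun x => (key x).trans (le_abs_self _))).trans_isLittleO
    (hf.norm_left.add hg.norm_left)

/-- derivative of `‖·‖ ^ c` away from zero, for arbitrary real exponent `c` -/
theorem hasFDerivAt_norm_rpow_ne {E : Type*} [NormedAddCommGroup E] [InnerProductSpace ℝ E]
    {η : E} (hη : η ≠ 0) (c : ℝ) :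
    HasFDerivAt (fun y : E => ‖y‖ ^ c) ((c * ‖η‖ ^ (c - 2)) • innerSL ℝ η) η := by
  have hn : ‖η‖ ≠ 0 := norm_ne_zero_iff.mpr hη
  have hn2 : ‖η‖ ^ (2:ℝ) ≠ 0 := by
    exact Real.rpow_natCast ‖η‖ 2 ▸ (by positivity)
  have h2 := (hasFDerivAt_norm_rpow η one_lt_two).rpow_const (p := c/2) (Or.inl hn2)
  have hfun : (fun y : E => (‖y‖ ^ (2:ℝ)) ^ (c/2)) = fun y : E => ‖y‖ ^ c := by
    funext y
    rw [← Real.rpow_mul (norm_nonneg y)]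
    congr 1
    ring
  rw [hfun] at h2
  convert h2 using 1
  rw [smul_smul]
  congr 1
  rw [← Real.rpow_mul (norm_nonneg η)]
  rw [show (2:ℝ) * (c/2 - 1) = c - 2 by ring, show (2:ℝ) - 2 = 0 by ring, Real.rpow_zero]
  ring

variable (p q : ℝ)

noncomputable def P1 (x : X2) : ℝ := ‖x.1‖ ^ (2:ℝ) * ‖x.2‖ ^ (2 - q)
noncomputable def P2 (x : X2) : ℝ := 2/p * ‖x.1‖ ^ p + (2/q - 1) * ‖x.2‖ ^ q
noncomputable def Gf (x : X2) : ℝ :=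
  if ‖x.1‖ ^ p ≤ ‖x.2‖ ^ q then P1 q x else P2 p q x

noncomputable def F1 (x : X2) : X2 →L[ℝ] ℝ :=
  (innerSL ℝ x.1).comp (fst ℝ E2 E2)
noncomputable def F2 (x : X2) : X2 →L[ℝ] ℝ :=
  (innerSL ℝ x.2).comp (snd ℝ E2 E2)

noncomputable def D1 (x : X2) : X2 →L[ℝ] ℝ :=
  (2 * ‖x.2‖ ^ (2 - q)) • F1 x + ((2 - q) * (‖x.1‖ ^ (2:ℝ) * ‖x.2‖ ^ (-q))) • F2 x
noncomputable def D2 (x : X2) : X2 →L[ℝ] ℝ :=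
  (2 * ‖x.1‖ ^ (p - 2)) • F1 x + ((2 - q) * ‖x.2‖ ^ (q - 2)) • F2 x
noncomputable def DG (x : X2) : X2 →L[ℝ] ℝ :=
  if ‖x.1‖ ^ p ≤ ‖x.2‖ ^ q then D1 q x else D2 p q x

variable {p q}

lemma basic (hp : 2 ≤ p) (hq : q = p / (p - 1)) :
    1 < p ∧ 0 < p ∧ 1 < q ∧ q ≤ 2 ∧ q * p = p + q := by
  have h1 : (0:ℝ) < p - 1 := by linarith
  refine ⟨by linarith, by linarith, ?_, ?_, ?_⟩
  · rw [hq, lt_div_iff₀ h1]; linarith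
  · rw [hq, div_le_iff₀ h1]; linarith
  · rw [hq]; field_simp; ring

lemma cond_imp (hp : 2 ≤ p) (hq : q = p / (p - 1)) {r s : ℝ} (hr : 0 ≤ r) (hs : 0 ≤ s)
    (h : r ^ p ≤ s ^ q) : r ≤ s ^ (q - 1) := by
  obtain ⟨hp1, hp0, hq1, hq2, hpq⟩ := basic hp hq
  have e1 : (q - 1) * p = q := by linear_combination hpq
  have h2 : r ^ p ≤ (s ^ (q - 1)) ^ p := by
    rw [← Real.rpow_mul hs, e1]; exact h
  exact (Real.rpow_le_rpow_iff hr (Real.rpow_nonneg hs _) hp0).mp h2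

lemma cond_imp' (hp : 2 ≤ p) (hq : q = p / (p - 1)) {r s : ℝ} (hr : 0 ≤ r) (hs : 0 ≤ s)
    (h : s ^ q ≤ r ^ p) : s ^ (q - 1) ≤ r := by
  obtain ⟨hp1, hp0, hq1, hq2, hpq⟩ := basic hp hq
  have e1 : (q - 1) * p = q := by linear_combination hpq
  have h2 : (s ^ (q - 1)) ^ p ≤ r ^ p := by
    rw [← Real.rpow_mul hs, e1]; exact h
  exact (Real.rpow_le_rpow_iff (Real.rpow_nonneg hs _) hr hp0).mp h2

lemma not_cond_imp (hp : 2 ≤ p) (hq : q = p / (p - 1)) {r s : ℝ} (hr : 0 ≤ r) (hs : 0 ≤ s)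
    (h : s ^ q ≤ r ^ p) : s ≤ r ^ (p - 1) := by
  obtain ⟨hp1, hp0, hq1, hq2, hpq⟩ := basic hp hq
  have e1 : (p - 1) * q = p := by linear_combination hpq
  have h2 : s ^ q ≤ (r ^ (p - 1)) ^ q := by
    rw [← Real.rpow_mul hr, e1]; exact h
  exact (Real.rpow_le_rpow_iff hs (Real.rpow_nonneg hr _) (by linarith)).mp h2

lemma eq_imp (hp : 2 ≤ p) (hq : q = p / (p - 1)) {r s : ℝ} (hr : 0 ≤ r) (hs : 0 ≤ s)
    (h : r ^ p = s ^ q) : r = s ^ (q - 1) :=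
  le_antisymm (cond_imp hp hq hr hs h.le) (cond_imp' hp hq hr hs h.ge)

lemma hsum (hp : 2 ≤ p) (hq : q = p / (p - 1)) : 2/p + (2/q - 1) = 1 := by
  obtain ⟨hp1, hp0, hq1, hq2, hpq⟩ := basic hp hq
  have h1 : p - 1 ≠ 0 := by linarith
  have h2 : p ≠ 0 := by linarith
  rw [hq]
  field_simp
  ring

lemma young (hp : 2 ≤ p) (hq : q = p / (p - 1)) {r s : ℝ} (hr : 0 ≤ r) (hs : 0 ≤ s) :
    r ^ (2:ℝ) * s ^ (2 - q) ≤ 2/p * r ^ p + (2/q - 1) * s ^ q := by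
  obtain ⟨hp1, hp0, hq1, hq2, hpq⟩ := basic hp hq
  have hq0 : 0 < q := by linarith
  have hw1 : (0:ℝ) ≤ 2/p := by positivity
  have hw2 : (0:ℝ) ≤ 2/q - 1 := by
    have : 1 ≤ 2/q := (one_le_div hq0).mpr hq2
    linarith
  have key : r ^ (2:ℝ) * s ^ (2 - q) = (r ^ p) ^ (2/p) * (s ^ q) ^ (2/q - 1) := by
    rw [← Real.rpow_mul hr, ← Real.rpow_mul hs]
    congr 1
    · congr 1; field_simp
    · congr 1; field_simp; try ring
  rw [key]
  exact Real.geom_mean_le_arith_mean2_weighted hw1 hw2 (Real.rpow_nonneg hr _)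
    (Real.rpow_nonneg hs _) (hsum hp hq)

lemma P1_nonneg (x : X2) : 0 ≤ P1 q x := by
  unfold P1; positivity

lemma P2_nonneg (hp : 2 ≤ p) (hq : q = p / (p - 1)) (x : X2) : 0 ≤ P2 p q x := by
  obtain ⟨hp1, hp0, hq1, hq2, hpq⟩ := basic hp hq
  have hq0 : 0 < q := by linarith
  have hw2 : (0:ℝ) ≤ 2/q - 1 := by
    have : 1 ≤ 2/q := (one_le_div hq0).mpr hq2
    linarith
  unfold P2
  have h1 : (0:ℝ) ≤ 2/p * ‖x.1‖ ^ p := by positivity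
  have h2 : (0:ℝ) ≤ (2/q - 1) * ‖x.2‖ ^ q := mul_nonneg hw2 (Real.rpow_nonneg (norm_nonneg _) _)
  linarith

lemma P1_le_P2 (hp : 2 ≤ p) (hq : q = p / (p - 1)) (x : X2) : P1 q x ≤ P2 p q x :=
  young hp hq (norm_nonneg _) (norm_nonneg _)

lemma P1_le_Gf (hp : 2 ≤ p) (hq : q = p / (p - 1)) (x : X2) : P1 q x ≤ Gf p q x := by
  unfold Gf; split_ifs
  · exact le_rfl
  · exact P1_le_P2 hp hq x

lemma Gf_le_P2 (hp : 2 ≤ p) (hq : q = p / (p - 1)) (x : X2) : Gf p q x ≤ P2 p q x := by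
  unfold Gf; split_ifs
  · exact P1_le_P2 hp hq x
  · exact le_rfl

lemma hasFDerivAt_P1 (x : X2) (hx : x.2 ≠ 0) : HasFDerivAt (P1 q) (D1 q x) x := by
  have h1 : HasFDerivAt (fun y : X2 => ‖y.1‖ ^ (2:ℝ))
      (((2 * ‖x.1‖ ^ ((2:ℝ) - 2)) • innerSL ℝ x.1).comp (fst ℝ E2 E2)) x :=
    (hasFDerivAt_norm_rpow x.1 one_lt_two).comp x hasFDerivAt_fst
  have h2 : HasFDerivAt (fun y : X2 => ‖y.2‖ ^ (2 - q))
      ((((2 - q) * ‖x.2‖ ^ ((2 - q) - 2)) • innerSL ℝ x.2).comp (snd ℝ E2 E2)) x :=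
    (hasFDerivAt_norm_rpow_ne hx (2 - q)).comp x hasFDerivAt_snd
  have h3 := h1.mul h2
  have e : D1 q x = ‖x.1‖ ^ (2:ℝ) • (((2 - q) * ‖x.2‖ ^ ((2 - q) - 2)) • innerSL ℝ x.2).comp (snd ℝ E2 E2)
      + ‖x.2‖ ^ (2 - q) • ((2 * ‖x.1‖ ^ ((2:ℝ) - 2)) • innerSL ℝ x.1).comp (fst ℝ E2 E2) := by
    unfold D1 F1 F2
    rw [ContinuousLinearMap.smul_comp, ContinuousLinearMap.smul_comp, smul_smul, smul_smul,
      add_comm]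
    congr 2
    · rw [show ((2:ℝ) - q) - 2 = -q by ring]; ring
    · rw [show ((2:ℝ) - 2) = 0 by ring, Real.rpow_zero]; ring
  rw [e]
  exact h3

lemma hasFDerivAt_P2 (hp : 2 ≤ p) (hq : q = p / (p - 1)) (x : X2) :
    HasFDerivAt (P2 p q) (D2 p q x) x := by
  obtain ⟨hp1, hp0, hq1, hq2, hpq⟩ := basic hp hq
  have hq0 : 0 < q := by linarith
  have h1 : HasFDerivAt (fun y : X2 => ‖y.1‖ ^ p)
      (((p * ‖x.1‖ ^ (p - 2)) • innerSL ℝ x.1).comp (fst ℝ E2 E2)) x :=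
    (hasFDerivAt_norm_rpow x.1 hp1).comp x hasFDerivAt_fst
  have h2 : HasFDerivAt (fun y : X2 => ‖y.2‖ ^ q)
      (((q * ‖x.2‖ ^ (q - 2)) • innerSL ℝ x.2).comp (snd ℝ E2 E2)) x :=
    (hasFDerivAt_norm_rpow x.2 hq1).comp x hasFDerivAt_snd
  have h3 := (h1.const_mul (2/p)).add (h2.const_mul (2/q - 1))
  have e : D2 p q x = (2/p) • ((p * ‖x.1‖ ^ (p - 2)) • innerSL ℝ x.1).comp (fst ℝ E2 E2)
      + (2/q - 1) • ((q * ‖x.2‖ ^ (q - 2)) • innerSL ℝ x.2).comp (snd ℝ E2 E2) := by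
    unfold D2 F1 F2
    rw [ContinuousLinearMap.smul_comp, ContinuousLinearMap.smul_comp, smul_smul, smul_smul]
    congr 2
    · field_simp
      try ring
    · field_simp
      try ring
  rw [e]
  exact h3

lemma boundary_key (hp : 2 ≤ p) (hq : q = p / (p - 1)) {x : X2}
    (h : ‖x.1‖ ^ p = ‖x.2‖ ^ q) : ‖x.1‖ = ‖x.2‖ ^ (q - 1) :=
  eq_imp hp hq (norm_nonneg _) (norm_nonneg _) h

lemma boundary_val (hp : 2 ≤ p) (hq : q = p / (p - 1)) {x : X2}
    (h : ‖x.1‖ ^ p = ‖x.2‖ ^ q) (hx : x.2 ≠ 0) : P2 p q x = P1 q x := by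
  obtain ⟨hp1, hp0, hq1, hq2, hpq⟩ := basic hp hq
  have hsp : 0 < ‖x.2‖ := norm_pos_iff.mpr hx
  have key := boundary_key hp hq h
  unfold P1 P2
  rw [h, key, ← Real.rpow_mul (norm_nonneg x.2), ← Real.rpow_add hsp,
    show (q - 1) * 2 + (2 - q) = q by ring]
  linear_combination (‖x.2‖ ^ q) * hsum hp hq

lemma boundary_deriv (hp : 2 ≤ p) (hq : q = p / (p - 1)) {x : X2}
    (h : ‖x.1‖ ^ p = ‖x.2‖ ^ q) (hx : x.2 ≠ 0) : D2 p q x = D1 q x := by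
  obtain ⟨hp1, hp0, hq1, hq2, hpq⟩ := basic hp hq
  have hsp : 0 < ‖x.2‖ := norm_pos_iff.mpr hx
  have key := boundary_key hp hq h
  have e2 : (q - 1) * (p - 2) = 2 - q := by linear_combination hpq
  unfold D1 D2
  congr 2
  · rw [key, ← Real.rpow_mul (norm_nonneg _), e2]
  · rw [key, ← Real.rpow_mul (norm_nonneg _), ← Real.rpow_add hsp,
      show (q - 1) * 2 + -q = q - 2 by ring]

lemma cont_rp (hp : 2 ≤ p) : Continuous (fun y : X2 => ‖y.1‖ ^ p) :=
  (continuous_fst.norm).rpow_const (fun _ => Or.inr (by linarith))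

lemma cont_sq (hp : 2 ≤ p) (hq : q = p / (p - 1)) : Continuous (fun y : X2 => ‖y.2‖ ^ q) := by
  obtain ⟨hp1, hp0, hq1, hq2, hpq⟩ := basic hp hq
  exact (continuous_snd.norm).rpow_const (fun _ => Or.inr (by linarith))

lemma hasFDerivAt_Gf (hp : 2 ≤ p) (hq : q = p / (p - 1)) (x : X2) :
    HasFDerivAt (Gf p q) (DG p q x) x := by
  obtain ⟨hp1, hp0, hq1, hq2, hpq⟩ := basic hp hq
  rcases lt_trichotomy (‖x.1‖ ^ p) (‖x.2‖ ^ q) with hlt | heq | hgt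
  · -- interior of region 1
    have hx2 : x.2 ≠ 0 := by
      intro h0
      rw [h0] at hlt
      simp only [norm_zero] at hlt
      rw [Real.zero_rpow (by linarith : q ≠ 0)] at hlt
      exact absurd hlt (not_lt.mpr (Real.rpow_nonneg (norm_nonneg _) _))
    have hev : ∀ᶠ y in 𝓝 x, Gf p q y = P1 q y := by
      have hop : IsOpen {y : X2 | ‖y.1‖ ^ p < ‖y.2‖ ^ q} :=
        isOpen_lt (cont_rp hp) (cont_sq hp hq)
      filter_upwards [hop.mem_nhds hlt] with y hy
      exact if_pos (le_of_lt hy)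
    rw [DG, if_pos hlt.le]
    exact (hasFDerivAt_P1 x hx2).congr_of_eventuallyEq hev
  · by_cases hx2 : x.2 = 0
    · -- the origin
      have hs0 : ‖x.2‖ = 0 := by rw [hx2, norm_zero]
      have hr0 : ‖x.1‖ = 0 := by
        have h1 : ‖x.1‖ ^ p = 0 := by
          rw [heq, hs0, Real.zero_rpow (by linarith : q ≠ 0)]
        exact (Real.rpow_eq_zero (norm_nonneg _) (by linarith : p ≠ 0)).mp h1
      have hx1 : x.1 = 0 := norm_eq_zero.mp hr0
      have hDG0 : DG p q x = 0 := by
        rw [DG, if_pos heq.le]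
        unfold D1 F1 F2
        simp [hx1, hx2]
      rw [hDG0]
      refine hasFDerivAt_of_squeeze (f := fun _ => (0:ℝ)) (g := P2 p q)
        (hasFDerivAt_const 0 x) ?_ ?_ ?_ ?_ (Gf_le_P2 hp hq)
      · have hD2 : D2 p q x = 0 := by
          unfold D2 F1 F2
          simp [hx1, hx2]
        have := hasFDerivAt_P2 hp hq x
        rwa [hD2] at this
      · unfold Gf
        rw [if_pos heq.le]
        unfold P1
        rw [hr0, Real.zero_rpow (by norm_num : (2:ℝ) ≠ 0), zero_mul]
      · unfold Gf
        rw [if_pos heq.le]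
        unfold P1 P2
        rw [hr0, hs0, Real.zero_rpow (by norm_num : (2:ℝ) ≠ 0), zero_mul,
          Real.zero_rpow (by linarith : p ≠ 0), Real.zero_rpow (by linarith : q ≠ 0)]
        ring
      · intro y
        exact le_trans (P1_nonneg y) (P1_le_Gf hp hq y)
    · -- the boundary, away from the origin
      rw [DG, if_pos heq.le]
      refine hasFDerivAt_of_squeeze (hasFDerivAt_P1 x hx2) ?_ ?_ ?_ (P1_le_Gf hp hq)
        (Gf_le_P2 hp hq)
      · rw [← boundary_deriv hp hq heq hx2]
        exact hasFDerivAt_P2 hp hq x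
      · unfold Gf; rw [if_pos heq.le]
      · unfold Gf; rw [if_pos heq.le]
        exact boundary_val hp hq heq hx2
  · -- interior of region 2
    have hev : ∀ᶠ y in 𝓝 x, Gf p q y = P2 p q y := by
      have hop : IsOpen {y : X2 | ‖y.2‖ ^ q < ‖y.1‖ ^ p} :=
        isOpen_lt (cont_sq hp hq) (cont_rp hp)
      filter_upwards [hop.mem_nhds hgt] with y hy
      exact if_neg (not_le.mpr hy)
    rw [DG, if_neg (not_le.mpr hgt)]
    exact (hasFDerivAt_P2 hp hq x).congr_of_eventuallyEq hev

noncomputable def bco (p q : ℝ) (x : X2) : ℝ :=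
  if ‖x.1‖ ^ p ≤ ‖x.2‖ ^ q then (2 - q) * (‖x.1‖ ^ (2:ℝ) * ‖x.2‖ ^ (-q))
  else (2 - q) * ‖x.2‖ ^ (q - 2)

lemma sq_le_of_cond (hp : 2 ≤ p) (hq : q = p / (p - 1)) {y : X2}
    (h : ‖y.1‖ ^ p ≤ ‖y.2‖ ^ q) : ‖y.1‖ ^ (2:ℝ) ≤ ‖y.2‖ ^ ((q - 1) * 2) := by
  have h1 := cond_imp hp hq (norm_nonneg y.1) (norm_nonneg y.2) h
  have h2 := Real.rpow_le_rpow (norm_nonneg y.1) h1 (by norm_num : (0:ℝ) ≤ 2)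
  rwa [← Real.rpow_mul (norm_nonneg y.2)] at h2

lemma sq_ge_of_not_cond (hp : 2 ≤ p) (hq : q = p / (p - 1)) {y : X2}
    (h : ‖y.2‖ ^ q ≤ ‖y.1‖ ^ p) : ‖y.2‖ ^ ((q - 1) * 2) ≤ ‖y.1‖ ^ (2:ℝ) := by
  have h1 := cond_imp' hp hq (norm_nonneg y.1) (norm_nonneg y.2) h
  have h2 := Real.rpow_le_rpow (Real.rpow_nonneg (norm_nonneg y.2) _) h1
    (by norm_num : (0:ℝ) ≤ 2)
  rwa [← Real.rpow_mul (norm_nonneg y.2)] at h2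

lemma DG_decomp (hp : 2 ≤ p) (hq : q = p / (p - 1)) (x : X2) :
    DG p q x = (2 * max (‖x.2‖ ^ (2 - q)) (‖x.1‖ ^ (p - 2))) • F1 x + bco p q x • F2 x := by
  obtain ⟨hp1, hp0, hq1, hq2, hpq⟩ := basic hp hq
  have e2 : (q - 1) * (p - 2) = 2 - q := by linear_combination hpq
  have e3 : (p - 1) * (2 - q) = p - 2 := by linear_combination -hpq
  rw [DG, bco]
  split_ifs with h
  · unfold D1
    congr 2
    have h1 := cond_imp hp hq (norm_nonneg x.1) (norm_nonneg x.2) h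
    have h2 := Real.rpow_le_rpow (norm_nonneg x.1) h1 (by linarith : (0:ℝ) ≤ p - 2)
    rw [← Real.rpow_mul (norm_nonneg x.2), e2] at h2
    rw [max_eq_left h2]
  · unfold D2
    congr 2
    have h1 := not_cond_imp hp hq (norm_nonneg x.1) (norm_nonneg x.2) (le_of_not_ge h)
    have h2 := Real.rpow_le_rpow (norm_nonneg x.2) h1 (by linarith : (0:ℝ) ≤ 2 - q)
    rw [← Real.rpow_mul (norm_nonneg x.1), e3] at h2
    rw [max_eq_right h2]

lemma bco_nonneg (hp : 2 ≤ p) (hq : q = p / (p - 1)) (x : X2) : 0 ≤ bco p q x := by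
  obtain ⟨hp1, hp0, hq1, hq2, hpq⟩ := basic hp hq
  rw [bco]
  split_ifs with h
  · exact mul_nonneg (by linarith) (by positivity)
  · exact mul_nonneg (by linarith) (by positivity)

lemma bco_bound (hp : 2 ≤ p) (hq : q = p / (p - 1)) (x : X2) :
    bco p q x * ‖x.2‖ ≤ (2 - q) * ‖x.2‖ ^ (q - 1) := by
  obtain ⟨hp1, hp0, hq1, hq2, hpq⟩ := basic hp hq
  rcases eq_or_lt_of_le (norm_nonneg x.2) with hs | hs
  · have hs0 : ‖x.2‖ = 0 := hs.symm
    rw [hs0, mul_zero]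
    exact mul_nonneg (by linarith) (Real.rpow_nonneg le_rfl _)
  · rw [bco]
    split_ifs with h
    · have h2 := sq_le_of_cond hp hq h
      have collapse : ‖x.2‖ ^ ((q - 1) * 2) * ‖x.2‖ ^ (-q) * ‖x.2‖ = ‖x.2‖ ^ (q - 1) := by
        rw [← Real.rpow_add hs, ← Real.rpow_add_one (ne_of_gt hs),
          show (q - 1) * 2 + -q + 1 = q - 1 by ring]
      calc (2 - q) * (‖x.1‖ ^ (2:ℝ) * ‖x.2‖ ^ (-q)) * ‖x.2‖
          ≤ (2 - q) * (‖x.2‖ ^ ((q - 1) * 2) * ‖x.2‖ ^ (-q)) * ‖x.2‖ := by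
            have hr : (0:ℝ) ≤ 2 - q := by linarith
            have hA := mul_le_mul_of_nonneg_right h2 (Real.rpow_nonneg (norm_nonneg x.2) (-q))
            exact mul_le_mul_of_nonneg_right (mul_le_mul_of_nonneg_left hA hr) (norm_nonneg x.2)
        _ = (2 - q) * ‖x.2‖ ^ (q - 1) := by rw [mul_assoc, collapse]
    · rw [mul_assoc, ← Real.rpow_add_one (ne_of_gt hs), show q - 2 + 1 = q - 1 by ring]

lemma bco_eq_min (hp : 2 ≤ p) (hq : q = p / (p - 1)) {x : X2} (hx : x.2 ≠ 0) :
    bco p q x = (2 - q) * min (‖x.1‖ ^ (2:ℝ) * ‖x.2‖ ^ (-q)) (‖x.2‖ ^ (q - 2)) := by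
  obtain ⟨hp1, hp0, hq1, hq2, hpq⟩ := basic hp hq
  have hs : 0 < ‖x.2‖ := norm_pos_iff.mpr hx
  have collapse : ‖x.2‖ ^ ((q - 1) * 2) * ‖x.2‖ ^ (-q) = ‖x.2‖ ^ (q - 2) := by
    rw [← Real.rpow_add hs, show (q - 1) * 2 + -q = q - 2 by ring]
  rw [bco]
  split_ifs with h
  · congr 1
    rw [min_eq_left]
    rw [← collapse]
    exact mul_le_mul_of_nonneg_right (sq_le_of_cond hp hq h)
      (Real.rpow_nonneg (norm_nonneg x.2) _)
  · congr 1
    rw [min_eq_right]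
    rw [← collapse]
    exact mul_le_mul_of_nonneg_right (sq_ge_of_not_cond hp hq (le_of_not_ge h))
      (Real.rpow_nonneg (norm_nonneg x.2) _)

lemma cont_F1 : Continuous fun x : X2 => F1 x := by
  unfold F1
  exact Continuous.clm_comp ((innerSL ℝ).continuous.comp continuous_fst) continuous_const

lemma cont_F2 : Continuous fun x : X2 => F2 x := by
  unfold F2
  exact Continuous.clm_comp ((innerSL ℝ).continuous.comp continuous_snd) continuous_const

lemma norm_F2_le (x : X2) : ‖F2 x‖ ≤ ‖x.2‖ := by
  unfold F2
  refine le_trans (ContinuousLinearMap.opNorm_comp_le _ _) ?_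
  rw [innerSL_apply_norm]
  calc ‖x.2‖ * ‖snd ℝ E2 E2‖ ≤ ‖x.2‖ * 1 :=
        mul_le_mul_of_nonneg_left (norm_snd_le (𝕜 := ℝ) (E := E2) (F := E2)) (norm_nonneg _)
    _ = ‖x.2‖ := mul_one _

lemma cont_DG (hp : 2 ≤ p) (hq : q = p / (p - 1)) : Continuous fun x : X2 => DG p q x := by
  obtain ⟨hp1, hp0, hq1, hq2, hpq⟩ := basic hp hq
  have hfun : (fun x : X2 => DG p q x) = fun x : X2 =>
      (2 * max (‖x.2‖ ^ (2 - q)) (‖x.1‖ ^ (p - 2))) • F1 x + bco p q x • F2 x :=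
    funext (DG_decomp hp hq)
  rw [hfun]
  have contA : Continuous fun x : X2 =>
      (2 * max (‖x.2‖ ^ (2 - q)) (‖x.1‖ ^ (p - 2))) • F1 x := by
    refine Continuous.smul (continuous_const.mul (Continuous.max (f := fun x : X2 => ‖x.2‖ ^ (2 - q)) (g := fun x : X2 => ‖x.1‖ ^ (p - 2)) ?_ ?_)) cont_F1
    · exact (continuous_snd.norm).rpow_const (fun _ => Or.inr (by linarith))
    · exact (continuous_fst.norm).rpow_const (fun _ => Or.inr (by linarith))
  refine contA.add ?_
  rw [continuous_iff_continuousAt]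
  intro x
  by_cases hx : x.2 = 0
  · have hval : bco p q x • F2 x = 0 := by
      have : F2 x = 0 := by unfold F2; rw [hx]; simp
      rw [this, smul_zero]
    rw [ContinuousAt, hval]
    have hbound : ∀ y : X2, ‖bco p q y • F2 y‖ ≤ (2 - q) * ‖y.2‖ ^ (q - 1) := by
      intro y
      refine le_trans (ContinuousLinearMap.opNorm_smul_le (bco p q y) (F2 y)) ?_
      rw [Real.norm_eq_abs, abs_of_nonneg (bco_nonneg hp hq y)]
      calc bco p q y * ‖F2 y‖ ≤ bco p q y * ‖y.2‖ :=
            mul_le_mul_of_nonneg_left (norm_F2_le y) (bco_nonneg hp hq y)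
        _ ≤ (2 - q) * ‖y.2‖ ^ (q - 1) := bco_bound hp hq y
    have htend : Filter.Tendsto (fun y : X2 => (2 - q) * ‖y.2‖ ^ (q - 1)) (𝓝 x) (𝓝 0) := by
      have hc : Continuous fun y : X2 => (2 - q) * ‖y.2‖ ^ (q - 1) :=
        continuous_const.mul ((continuous_snd.norm).rpow_const (fun _ => Or.inr (by linarith)))
      have := hc.tendsto x
      rw [show (2 - q) * ‖x.2‖ ^ (q - 1) = 0 by
        rw [hx, norm_zero, Real.zero_rpow (by linarith : q - 1 ≠ 0), mul_zero]] at this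
      exact this
    exact squeeze_zero_norm hbound htend
  · have hev : (fun y : X2 => bco p q y • F2 y) =ᶠ[𝓝 x]
        (fun y : X2 => ((2 - q) * min (‖y.1‖ ^ (2:ℝ) * ‖y.2‖ ^ (-q)) (‖y.2‖ ^ (q - 2))) • F2 y) := by
      have hop : IsOpen {y : X2 | y.2 ≠ 0} := isOpen_ne_fun continuous_snd continuous_const
      filter_upwards [hop.mem_nhds hx] with y hy
      rw [bco_eq_min hp hq hy]
    refine ContinuousAt.congr_of_eventuallyEq ?_ hev
    have hne : ‖x.2‖ ≠ 0 := by simpa using hx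
    have m1 : ContinuousAt (fun y : X2 => ‖y.1‖ ^ (2:ℝ) * ‖y.2‖ ^ (-q)) x := by
      refine ContinuousAt.mul ?_ ?_
      · exact ((continuous_fst.norm).rpow_const (fun _ => Or.inr (by norm_num))).continuousAt
      · exact (continuous_snd.norm.continuousAt).rpow_const (Or.inl hne)
    have m2 : ContinuousAt (fun y : X2 => ‖y.2‖ ^ (q - 2)) x :=
      (continuous_snd.norm.continuousAt).rpow_const (Or.inl hne)
    exact ((continuousAt_const.mul (m1.min m2)).smul cont_F2.continuousAt)

lemma contDiff_Gf (hp : 2 ≤ p) (hq : q = p / (p - 1)) : ContDiff ℝ 1 (Gf p q) := by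
  rw [contDiff_one_iff_fderiv]
  refine ⟨fun x => (hasFDerivAt_Gf hp hq x).differentiableAt, ?_⟩
  have : (fderiv ℝ (Gf p q)) = fun x => DG p q x :=
    funext fun x => (hasFDerivAt_Gf hp hq x).fderiv
  rw [this]
  exact cont_DG hp hq

noncomputable def NTB' (p q δ : ℝ) (v : X2) : ℝ :=
  if ‖v.1‖ ^ p ≤ ‖v.2‖ ^ q then
    ‖v.1‖ ^ p + ‖v.2‖ ^ q + δ * (‖v.1‖ ^ (2:ℝ) * ‖v.2‖ ^ (2 - q))
  else
    ‖v.1‖ ^ p + ‖v.2‖ ^ q + δ * (2/p * ‖v.1‖ ^ p + (2/q - 1) * ‖v.2‖ ^ q)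

lemma NT_eq (p q δ : ℝ) :
    NTB' p q δ = fun x : X2 => ‖x.1‖ ^ p + ‖x.2‖ ^ q + δ * Gf p q x := by
  funext v
  rw [NTB', Gf]
  split_ifs with h <;> simp [P1, P2]

noncomputable def DQ (p q δ : ℝ) (x : X2) : X2 →L[ℝ] ℝ :=
  ((p * ‖x.1‖ ^ (p - 2)) • F1 x + (q * ‖x.2‖ ^ (q - 2)) • F2 x) + δ • DG p q x

lemma hasFDerivAt_NT (hp : 2 ≤ p) (hq : q = p / (p - 1)) (δ : ℝ) (x : X2) :
    HasFDerivAt (NTB' p q δ) (DQ p q δ x) x := by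
  obtain ⟨hp1, hp0, hq1, hq2, hpq⟩ := basic hp hq
  rw [NT_eq]
  have h1 : HasFDerivAt (fun y : X2 => ‖y.1‖ ^ p)
      (((p * ‖x.1‖ ^ (p - 2)) • innerSL ℝ x.1).comp (fst ℝ E2 E2)) x :=
    (hasFDerivAt_norm_rpow x.1 hp1).comp x hasFDerivAt_fst
  have h2 : HasFDerivAt (fun y : X2 => ‖y.2‖ ^ q)
      (((q * ‖x.2‖ ^ (q - 2)) • innerSL ℝ x.2).comp (snd ℝ E2 E2)) x :=
    (hasFDerivAt_norm_rpow x.2 hq1).comp x hasFDerivAt_snd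
  have h3 := (h1.add h2).add ((hasFDerivAt_Gf hp hq x).const_mul δ)
  have e : DQ p q δ x = (((p * ‖x.1‖ ^ (p - 2)) • innerSL ℝ x.1).comp (fst ℝ E2 E2)
      + ((q * ‖x.2‖ ^ (q - 2)) • innerSL ℝ x.2).comp (snd ℝ E2 E2)) + δ • DG p q x := by
    unfold DQ F1 F2
    rw [ContinuousLinearMap.smul_comp, ContinuousLinearMap.smul_comp]
  rw [e]
  exact h3

lemma contDiff_NT (hp : 2 ≤ p) (hq : q = p / (p - 1)) (δ : ℝ) :
    ContDiff ℝ 1 (NTB' p q δ) := by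
  obtain ⟨hp1, hp0, hq1, hq2, hpq⟩ := basic hp hq
  rw [NT_eq]
  exact (((contDiff_norm_rpow hp1).comp contDiff_fst).add
    ((contDiff_norm_rpow hq1).comp contDiff_snd)).add
    (contDiff_const.mul (contDiff_Gf hp hq))

noncomputable def Cz (p q δ : ℝ) (x : X2) : ℝ :=
  p * ‖x.1‖ ^ (p - 2) +
    δ * (if ‖x.1‖ ^ p ≤ ‖x.2‖ ^ q then 2 * ‖x.2‖ ^ (2 - q) else 2 * ‖x.1‖ ^ (p - 2))

noncomputable def Ce (p q δ : ℝ) (x : X2) : ℝ :=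
  q * ‖x.2‖ ^ (q - 2) + δ * bco p q x

lemma DQ_apply_fst (p q δ : ℝ) (x : X2) (i : Fin 2) :
    DQ p q δ x (EuclideanSpace.single i 1, 0) = Cz p q δ x * x.1 i := by
  unfold DQ DG D1 D2 Cz F1 F2
  split_ifs with h <;>
  · simp only [ContinuousLinearMap.add_apply, ContinuousLinearMap.smul_apply,
      ContinuousLinearMap.coe_comp', Function.comp_apply, ContinuousLinearMap.coe_fst',
      ContinuousLinearMap.coe_snd', innerSL_apply_apply, smul_eq_mul]
    rw [inner_zero_right, EuclideanSpace.inner_single_right]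
    simp only [starRingEnd_apply, star_trivial, mul_zero, add_zero, zero_add, mul_one, one_mul]
    ring

lemma DQ_apply_snd (p q δ : ℝ) (x : X2) (i : Fin 2) :
    DQ p q δ x (0, EuclideanSpace.single i 1) = Ce p q δ x * x.2 i := by
  unfold DQ DG D1 D2 Ce F1 F2 bco
  split_ifs with h <;>
  · simp only [ContinuousLinearMap.add_apply, ContinuousLinearMap.smul_apply,
      ContinuousLinearMap.coe_comp', Function.comp_apply, ContinuousLinearMap.coe_fst',
      ContinuousLinearMap.coe_snd', innerSL_apply_apply, smul_eq_mul]
    rw [inner_zero_right, EuclideanSpace.inner_single_right]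
    simp only [starRingEnd_apply, star_trivial, mul_zero, add_zero, zero_add, mul_one, one_mul]
    ring

lemma Cz_nonneg (hp : 2 ≤ p) (hq : q = p / (p - 1)) (hδ : 0 < δ) (x : X2) :
    0 ≤ Cz p q δ x := by
  obtain ⟨hp1, hp0, hq1, hq2, hpq⟩ := basic hp hq
  unfold Cz
  split_ifs with h
  · have := Real.rpow_nonneg (norm_nonneg x.1) (p - 2)
    have := Real.rpow_nonneg (norm_nonneg x.2) (2 - q)
    nlinarith
  · have := Real.rpow_nonneg (norm_nonneg x.1) (p - 2)
    nlinarith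

lemma Ce_nonneg (hp : 2 ≤ p) (hq : q = p / (p - 1)) (hδ : 0 < δ) (x : X2) :
    0 ≤ Ce p q δ x := by
  obtain ⟨hp1, hp0, hq1, hq2, hpq⟩ := basic hp hq
  unfold Ce
  have h1 := Real.rpow_nonneg (norm_nonneg x.2) (q - 2)
  have h2 := bco_nonneg hp hq x
  nlinarith

lemma main1 (hp : 2 ≤ p) (hq : q = p / (p - 1)) (hδ : 0 < δ) (x : X2) :
    Cz p q δ x * ‖x.1‖ ≤ (p + 2*δ) * max (‖x.1‖ ^ (p - 1)) ‖x.2‖ := by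
  obtain ⟨hp1, hp0, hq1, hq2, hpq⟩ := basic hp hq
  have hmax0 : 0 ≤ max (‖x.1‖ ^ (p - 1)) ‖x.2‖ :=
    le_trans (Real.rpow_nonneg (norm_nonneg x.1) _) (le_max_left _ _)
  rcases eq_or_lt_of_le (norm_nonneg x.1) with hr | hr
  · rw [show Cz p q δ x * ‖x.1‖ = 0 from by rw [← hr, mul_zero]]
    exact mul_nonneg (by linarith) hmax0
  · have hr1 : ‖x.1‖ ^ (p - 2) * ‖x.1‖ = ‖x.1‖ ^ (p - 1) := by
      rw [← Real.rpow_add_one (ne_of_gt hr), show p - 2 + 1 = p - 1 by ring]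
    unfold Cz
    split_ifs with h
    · -- region 1 : r ≤ s^(q-1), so r * s^(2-q) ≤ s
      have hs : 0 < ‖x.2‖ := by
        rcases eq_or_lt_of_le (norm_nonneg x.2) with hs | hs
        · exfalso
          rw [← hs, Real.zero_rpow (by linarith : q ≠ 0)] at h
          have := Real.rpow_pos_of_pos hr p
          linarith
        · exact hs
      have h1 := cond_imp hp hq (norm_nonneg x.1) (norm_nonneg x.2) h
      have h2 : ‖x.1‖ * ‖x.2‖ ^ (2 - q) ≤ ‖x.2‖ := by
        calc ‖x.1‖ * ‖x.2‖ ^ (2 - q) ≤ ‖x.2‖ ^ (q - 1) * ‖x.2‖ ^ (2 - q) :=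
              mul_le_mul_of_nonneg_right h1 (Real.rpow_nonneg (norm_nonneg x.2) _)
          _ = ‖x.2‖ := by
              rw [← Real.rpow_add hs, show q - 1 + (2 - q) = 1 by ring, Real.rpow_one]
      have h3 : ‖x.1‖ ^ (p - 1) ≤ max (‖x.1‖ ^ (p - 1)) ‖x.2‖ := le_max_left _ _
      have h4 : ‖x.2‖ ≤ max (‖x.1‖ ^ (p - 1)) ‖x.2‖ := le_max_right _ _
      calc (p * ‖x.1‖ ^ (p - 2) + δ * (2 * ‖x.2‖ ^ (2 - q))) * ‖x.1‖
          = p * (‖x.1‖ ^ (p - 2) * ‖x.1‖) + 2 * δ * (‖x.1‖ * ‖x.2‖ ^ (2 - q)) := by ring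
        _ ≤ p * max (‖x.1‖ ^ (p - 1)) ‖x.2‖ + 2 * δ * max (‖x.1‖ ^ (p - 1)) ‖x.2‖ := by
            have b1 : p * (‖x.1‖ ^ (p - 2) * ‖x.1‖) ≤ p * max (‖x.1‖ ^ (p - 1)) ‖x.2‖ := by
              rw [hr1]; exact mul_le_mul_of_nonneg_left h3 (by linarith)
            have b2 : 2 * δ * (‖x.1‖ * ‖x.2‖ ^ (2 - q)) ≤
                2 * δ * max (‖x.1‖ ^ (p - 1)) ‖x.2‖ :=
              mul_le_mul_of_nonneg_left (le_trans h2 h4) (by linarith)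
            linarith
        _ = (p + 2*δ) * max (‖x.1‖ ^ (p - 1)) ‖x.2‖ := by ring
    · calc (p * ‖x.1‖ ^ (p - 2) + δ * (2 * ‖x.1‖ ^ (p - 2))) * ‖x.1‖
          = (p + 2*δ) * (‖x.1‖ ^ (p - 2) * ‖x.1‖) := by ring
        _ = (p + 2*δ) * ‖x.1‖ ^ (p - 1) := by rw [hr1]
        _ ≤ (p + 2*δ) * max (‖x.1‖ ^ (p - 1)) ‖x.2‖ :=
            mul_le_mul_of_nonneg_left (le_max_left _ _) (by linarith)

lemma main2 (hp : 2 ≤ p) (hq : q = p / (p - 1)) (hδ : 0 < δ) (x : X2) :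
    Ce p q δ x * ‖x.2‖ ≤ (q + (2 - q)*δ) * ‖x.2‖ ^ (q - 1) := by
  obtain ⟨hp1, hp0, hq1, hq2, hpq⟩ := basic hp hq
  rcases eq_or_lt_of_le (norm_nonneg x.2) with hs | hs
  · rw [show Ce p q δ x * ‖x.2‖ = 0 from by rw [← hs, mul_zero]]
    refine mul_nonneg (by nlinarith) (Real.rpow_nonneg (norm_nonneg x.2) _)
  · have h1 : ‖x.2‖ ^ (q - 2) * ‖x.2‖ = ‖x.2‖ ^ (q - 1) := by
      rw [← Real.rpow_add_one (ne_of_gt hs), show q - 2 + 1 = q - 1 by ring]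
    have h2 := bco_bound hp hq x
    unfold Ce
    calc (q * ‖x.2‖ ^ (q - 2) + δ * bco p q x) * ‖x.2‖
        = q * (‖x.2‖ ^ (q - 2) * ‖x.2‖) + δ * (bco p q x * ‖x.2‖) := by ring
      _ ≤ q * ‖x.2‖ ^ (q - 1) + δ * ((2 - q) * ‖x.2‖ ^ (q - 1)) := by
          rw [h1]
          have := mul_le_mul_of_nonneg_left h2 (le_of_lt hδ)
          linarith
      _ = (q + (2 - q)*δ) * ‖x.2‖ ^ (q - 1) := by ring

lemma cabs (c a b : ℝ) :
    2 * ‖(1/2 : ℂ) * (((c*a : ℝ) : ℂ) - Complex.I * ((c*b : ℝ) : ℂ))‖ =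
      |c| * Real.sqrt (a^2 + b^2) := by
  rw [norm_mul]
  have h0 : ‖(1/2 : ℂ)‖ = 1/2 := by
    norm_num
  rw [h0]
  have h1 : (((c*a : ℝ) : ℂ) - Complex.I * ((c*b : ℝ) : ℂ)) = Complex.mk (c*a) (-(c*b)) := by
    apply Complex.ext <;> simp
  rw [h1]
  rw [Complex.norm_def, Complex.normSq_mk]
  rw [show c*a*(c*a) + -(c*b)*-(c*b) = c^2 * (a^2+b^2) by ring]
  rw [Real.sqrt_mul (sq_nonneg c), Real.sqrt_sq_eq_abs]
  ring

lemma norm_E2 (ζ : E2) : ‖ζ‖ = Real.sqrt ((ζ 0)^2 + (ζ 1)^2) := by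
  rw [EuclideanSpace.norm_eq]
  congr 1
  rw [Fin.sum_univ_two]
  simp [Real.norm_eq_abs, sq_abs]

end NTB



theorem stmt_10 (p q δ : ℝ) (hp : 2 ≤ p) (hq : q = p / (p - 1)) (hδ : 0 < δ) :
    ContDiff ℝ 1 (NTBellman p q δ) ∧
    ∀ ζ η : EuclideanSpace ℝ (Fin 2),
      2 * ‖(1/2) *
          ((fderiv ℝ (NTBellman p q δ) (ζ, η) (EuclideanSpace.single 0 1, 0) : ℂ)
            - Complex.I *
              (fderiv ℝ (NTBellman p q δ) (ζ, η) (EuclideanSpace.single 1 1, 0) : ℂ))‖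
        ≤ (p + 2*δ) * max (‖ζ‖ ^ (p - 1)) ‖η‖ ∧
      2 * ‖(1/2) *
          ((fderiv ℝ (NTBellman p q δ) (ζ, η) (0, EuclideanSpace.single 0 1) : ℂ)
            - Complex.I *
              (fderiv ℝ (NTBellman p q δ) (ζ, η) (0, EuclideanSpace.single 1 1) : ℂ))‖
        ≤ (q + (2 - q)*δ) * ‖η‖ ^ (q - 1) := by
  have hNT : NTBellman p q δ = NTB.NTB' p q δ := rfl
  constructor
  · rw [hNT]
    exact NTB.contDiff_NT hp hq δ
  · intro ζ η
    have hfd : fderiv ℝ (NTBellman p q δ) (ζ, η) = NTB.DQ p q δ (ζ, η) := by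
      rw [hNT]
      exact (NTB.hasFDerivAt_NT hp hq δ (ζ, η)).fderiv
    constructor
    · rw [hfd, NTB.DQ_apply_fst, NTB.DQ_apply_fst, NTB.cabs,
        ← NTB.norm_E2 ((ζ, η) : (EuclideanSpace ℝ (Fin 2)) × (EuclideanSpace ℝ (Fin 2))).1,
        abs_of_nonneg (NTB.Cz_nonneg hp hq hδ _)]
      exact NTB.main1 hp hq hδ (ζ, η)
    · rw [hfd, NTB.DQ_apply_snd, NTB.DQ_apply_snd, NTB.cabs,
        ← NTB.norm_E2 ((ζ, η) : (EuclideanSpace ℝ (Fin 2)) × (EuclideanSpace ℝ (Fin 2))).2,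
        abs_of_nonneg (NTB.Ce_nonneg hp hq hδ _)]
      exact NTB.main2 hp hq hδ (ζ, η)
end

section
/- Fix $r \geq 2$ and a bounded strictly accretive operator $B$ on the complexification of a real Hilbert space $\mathcal{H}$, with $B$ the complexification of a real operator. For $z \in \mathbb{C}$, $\xi \in \mathcal{H}^{\mathbb{C}}$, the second-derivative form of $F_r(s)=|s|^r$ satisfies the explicit formula $H^B_{F_r}[z;\xi] = r|z|^{r-4}\big(\langle B_s \Im(\bar z\xi), \Im(\bar z\xi)\rangle + (r-1)\langle B_s \Re(\bar z\xi), \Re(\bar z\xi)\rangle\big)$ for $z \neq 0$, where $B_s$ is the symmetric part of $B$. -/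
open ContinuousLinearMap
open scoped RealInnerProductSpace

lemma rpow_norm_hasFDerivAt {E : Type*} [NormedAddCommGroup E] [InnerProductSpace ℝ E]
    (c : ℝ) {s : E} (hs : s ≠ 0) :
    HasFDerivAt (fun u : E => ‖u‖ ^ c) ((c * ‖s‖ ^ (c - 2)) • (innerSL ℝ s : E →L[ℝ] ℝ)) s := by
  have hns : (0:ℝ) < ‖s‖ := norm_pos_iff.mpr hs
  have hsq : HasFDerivAt (fun u : E => (‖u‖ ^ 2 : ℝ)) ((2 : ℕ) • (innerSL ℝ s)) s :=
    (hasStrictFDerivAt_norm_sq s).hasFDerivAt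
  have hrpow : HasDerivAt (fun t : ℝ => t ^ (c/2)) ((c/2) * (‖s‖^2) ^ (c/2 - 1)) (‖s‖^2) :=
    Real.hasDerivAt_rpow_const (Or.inl (by positivity))
  have hcomp := hrpow.comp_hasFDerivAt s hsq
  have heq2 : ((c/2) * (‖s‖^2) ^ (c/2 - 1)) • ((2 : ℕ) • (innerSL ℝ s))
      = (c * ‖s‖ ^ (c - 2)) • (innerSL ℝ s : E →L[ℝ] ℝ) := by
    ext y
    simp only [smul_apply, smul_eq_mul, smul_smul]
    rw [← Real.rpow_natCast ‖s‖ 2, ← Real.rpow_mul (norm_nonneg s),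
      show ((2:ℕ):ℝ) * (c/2 - 1) = c - 2 by push_cast; ring]
    push_cast
    ring
  rw [heq2] at hcomp
  refine hcomp.congr_of_eventuallyEq (Filter.Eventually.of_forall fun u => ?_)
  show ‖u‖ ^ c = ((fun t : ℝ => t ^ (c/2)) ∘ fun u : E => ‖u‖^2) u
  show ‖u‖ ^ c = (‖u‖^2 : ℝ) ^ (c/2)
  rw [← Real.rpow_natCast ‖u‖ 2, ← Real.rpow_mul (norm_nonneg u)]
  congr 1
  push_cast; ring

lemma hess_entry {n : Type*} [Fintype n] [DecidableEq n] (r : ℝ)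
    {s : EuclideanSpace ℝ n} (hs : s ≠ 0) (i j : n) :
    fderiv ℝ (fun t : EuclideanSpace ℝ n =>
        fderiv ℝ (fun u : EuclideanSpace ℝ n => ‖u‖ ^ r) t (EuclideanSpace.single i 1))
      s (EuclideanSpace.single j 1)
    = r * (r-2) * ‖s‖ ^ (r-4) * s i * s j
      + r * ‖s‖ ^ (r-2) * (if j = i then 1 else 0) := by
  have hns : (0:ℝ) < ‖s‖ := norm_pos_iff.mpr hs
  have hev : (fun t : EuclideanSpace ℝ n =>
        fderiv ℝ (fun u : EuclideanSpace ℝ n => ‖u‖ ^ r) t (EuclideanSpace.single i 1))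
      =ᶠ[nhds s] (fun t => (r * ‖t‖ ^ (r-2)) * t i) := by
    filter_upwards [IsOpen.mem_nhds isOpen_compl_singleton hs] with t ht
    rw [(rpow_norm_hasFDerivAt r ht).fderiv]
    simp [EuclideanSpace.inner_single_right, mul_assoc]
  have hc : HasFDerivAt (fun t : EuclideanSpace ℝ n => r * ‖t‖ ^ (r-2))
      (r • (((r-2) * ‖s‖ ^ (r-2-2)) • (innerSL ℝ s))) s :=
    (rpow_norm_hasFDerivAt (r-2) hs).const_mul r
  have hp : HasFDerivAt (fun t : EuclideanSpace ℝ n => t i)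
      (EuclideanSpace.proj i : EuclideanSpace ℝ n →L[ℝ] ℝ) s := by
    exact (EuclideanSpace.proj i : EuclideanSpace ℝ n →L[ℝ] ℝ).hasFDerivAt
  have hmul := hc.mul hp
  rw [hev.fderiv_eq, show (fun t : EuclideanSpace ℝ n => r * ‖t‖ ^ (r-2) * t i)
      = ((fun t : EuclideanSpace ℝ n => r * ‖t‖ ^ (r-2)) * fun t => t i) from rfl, hmul.fderiv]
  simp [EuclideanSpace.inner_single_right, EuclideanSpace.single_apply,
    show r-2-2 = r-4 by ring]
  simp [eq_comm]
  ring

lemma sym_part_re {H HC : Type*}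
    [NormedAddCommGroup H] [InnerProductSpace ℝ H] [CompleteSpace H]
    [NormedAddCommGroup HC] [InnerProductSpace ℂ HC] [CompleteSpace HC]
    (J : H →ₗ[ℝ] HC)
    (hJ : ∀ x y : H, (inner ℂ (J x) (J y) : ℂ) = ((⟪x, y⟫ : ℝ) : ℂ))
    (B : HC →L[ℂ] HC) (Br Bi : H →L[ℝ] H)
    (hB : ∀ x : H, B (J x) = J (Br x) + Complex.I • J (Bi x)) (hBi : Bi = 0)
    (v : H) :
    (inner ℂ (((1/2 : ℂ) • (B + adjoint B)) (J v)) (J v) : ℂ).re = ⟪Br v, v⟫ := by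
  have hBv : B (J v) = J (Br v) := by rw [hB v, hBi]; simp
  have h1 : (inner ℂ ((adjoint B) (J v)) (J v) : ℂ) = inner ℂ (J v) (B (J v)) :=
    ContinuousLinearMap.adjoint_inner_left B (J v) (J v)
  rw [ContinuousLinearMap.smul_apply, ContinuousLinearMap.add_apply, inner_smul_left,
    inner_add_left, h1, hBv, hJ, hJ]
  have : ⟪v, Br v⟫ = ⟪Br v, v⟫ := real_inner_comm _ _
  rw [this]
  simp
  ring

/-- The generalized Hessian form `H^D_Ψ[s;ξ] = ⟨(Hess(Ψ;s)⊗I)ξ, M(D)ξ⟩`, where the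
operator `D` on the complexification of `H` has real part `Dr` and imaginary part `Di`,
and `h` is the Hessian matrix. -/
noncomputable def HForm {H : Type*} [NormedAddCommGroup H] [InnerProductSpace ℝ H]
    (h : Fin 2 → Fin 2 → ℝ) (Dr Di : H →L[ℝ] H) (ξ : Fin 2 → H) : ℝ :=
  ⟪h 0 0 • ξ 0 + h 0 1 • ξ 1, Dr (ξ 0) - Di (ξ 1)⟫ +
    ⟪h 1 0 • ξ 0 + h 1 1 • ξ 1, Di (ξ 0) + Dr (ξ 1)⟫

theorem stmt_17 {H HC : Type*}
    [NormedAddCommGroup H] [InnerProductSpace ℝ H] [CompleteSpace H]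
    [NormedAddCommGroup HC] [InnerProductSpace ℂ HC] [CompleteSpace HC]
    -- `J` realises `HC` as the complexification of `H`
    (J : H →ₗ[ℝ] HC)
    (hJ : ∀ x y : H, (inner ℂ (J x) (J y) : ℂ) = ((⟪x, y⟫ : ℝ) : ℂ))
    (hsurj : ∀ v : HC, ∃ x y : H, v = J x + Complex.I • J y)
    -- `B` is a bounded strictly accretive operator on `HC`, the complexification of a
    -- real operator with real part `Br` (and vanishing imaginary part `Bi`)
    (B : HC →L[ℂ] HC) (Br Bi : H →L[ℝ] H)
    (hB : ∀ x : H, B (J x) = J (Br x) + Complex.I • J (Bi x)) (hBi : Bi = 0)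
    (lam : ℝ) (hlam : 0 < lam)
    (hacc : ∀ ξ : HC, lam * ‖ξ‖^2 ≤ (inner ℂ (B ξ) ξ : ℂ).re)
    (r : ℝ) (hr : 2 ≤ r)
    (s : EuclideanSpace ℝ (Fin 2)) (hs : s ≠ 0) (ξ : Fin 2 → H) :
    HForm
      (fun i j =>
        fderiv ℝ
          (fun t : EuclideanSpace ℝ (Fin 2) =>
            fderiv ℝ (fun u : EuclideanSpace ℝ (Fin 2) => ‖u‖ ^ r) t
              (EuclideanSpace.single i 1))
          s (EuclideanSpace.single j 1))
      Br Bi ξ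
    = r * ‖s‖ ^ (r - 4) *
        ((inner ℂ (((1/2 : ℂ) • (B + adjoint B)) (J (s 0 • ξ 1 - s 1 • ξ 0)))
            (J (s 0 • ξ 1 - s 1 • ξ 0)) : ℂ).re
          + (r - 1) *
            (inner ℂ (((1/2 : ℂ) • (B + adjoint B)) (J (s 0 • ξ 0 + s 1 • ξ 1)))
              (J (s 0 • ξ 0 + s 1 • ξ 1)) : ℂ).re) := by
  have hns : (0:ℝ) < ‖s‖ := norm_pos_iff.mpr hs
  have hnorm : ‖s‖ ^ (r-2) = ‖s‖ ^ (r-4) * (s 0 ^ 2 + s 1 ^ 2) := by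
    have h2 : ‖s‖ ^ (2:ℝ) = s 0 ^ 2 + s 1 ^ 2 := by
      rw [Real.rpow_two, EuclideanSpace.norm_eq, Real.sq_sqrt (by positivity)]
      simp [Fin.sum_univ_two, sq_abs]
    rw [show r - 2 = (r-4) + 2 by ring, Real.rpow_add hns, h2]
  rw [sym_part_re J hJ B Br Bi hB hBi, sym_part_re J hJ B Br Bi hB hBi]
  simp only [HForm, hBi, ContinuousLinearMap.zero_apply, sub_zero, zero_add]
  rw [hess_entry r hs 0 0, hess_entry r hs 0 1, hess_entry r hs 1 0, hess_entry r hs 1 1]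
  simp only [map_sub, map_add, map_smul, inner_add_left, inner_sub_left, inner_add_right,
    inner_sub_right, real_inner_smul_left, real_inner_smul_right]
  rw [real_inner_comm (Br (ξ 0)) (ξ 0), real_inner_comm (Br (ξ 0)) (ξ 1),
    real_inner_comm (Br (ξ 1)) (ξ 0), real_inner_comm (Br (ξ 1)) (ξ 1), hnorm]
  norm_num
  ring
end

section
/- Let $\mathcal{H}$ be a real Hilbert space, $B$ a bounded strictly accretive operator on $\mathcal{H}$ (identified with its complexification) with numerical range angle $\theta_2^*$, $1 < r < 2$, $0 \leq \theta \leq \theta_r$, and $C \in \{e^{i\theta}B, e^{-i\theta}B, e^{i\theta}B^*, e^{-i\theta}B^*\}$. If the second-derivative forms satisfy $H^C_{F_r}[s;\xi] \geq 0$, then $H^C_{F_{2-r}}[s;\xi] \geq -2(r-1)(1+\tan\theta_2^*)\,|s|^{-r}\,\|B_s^{1/2}\tilde\xi\|^2$ for every $s \in \mathbb{R}^2\setminus\{0\}$ and $\xi = (\xi_1,\xi_2) \in \mathcal{H}^2$, where $\tilde\xi = \xi_1 + i\xi_2$. -/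
open Real ContinuousLinearMap
open scoped RealInnerProductSpace

/-- The Hessian matrix of the power function `F_ρ(s) = |s|^ρ` at `s ∈ ℝ²`. -/
noncomputable def powHess (ρ : ℝ) (s : EuclideanSpace ℝ (Fin 2)) : Fin 2 → Fin 2 → ℝ :=
  fun i j =>
    fderiv ℝ
      (fun t : EuclideanSpace ℝ (Fin 2) =>
        fderiv ℝ (fun u : EuclideanSpace ℝ (Fin 2) => ‖u‖ ^ ρ) t
          (EuclideanSpace.single i 1))
      s (EuclideanSpace.single j 1)

/- ### Auxiliary lemmas -/

lemma aux_norm_rpow_eq (ρ : ℝ) : (fun u : EuclideanSpace ℝ (Fin 2) => ‖u‖ ^ ρ)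
    = fun u => (‖u‖ ^ 2 : ℝ) ^ (ρ/2) := by
  funext u
  rw [← Real.rpow_natCast ‖u‖ 2, ← Real.rpow_mul (norm_nonneg u)]
  congr 1
  push_cast
  ring

lemma aux_grad_norm_rpow (ρ : ℝ) (t : EuclideanSpace ℝ (Fin 2)) (ht : t ≠ 0) :
    HasFDerivAt (fun u : EuclideanSpace ℝ (Fin 2) => ‖u‖ ^ ρ)
      (((ρ/2) * ((‖t‖ ^ 2 : ℝ)) ^ (ρ/2 - 1)) • (2 • innerSL ℝ t)) t := by
  rw [aux_norm_rpow_eq]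
  exact (hasStrictFDerivAt_norm_sq t).hasFDerivAt.rpow_const
    (Or.inl (pow_ne_zero _ (norm_ne_zero_iff.mpr ht)))

lemma aux_fderiv_norm_rpow_apply (ρ : ℝ) (t : EuclideanSpace ℝ (Fin 2)) (ht : t ≠ 0)
    (v : EuclideanSpace ℝ (Fin 2)) :
    fderiv ℝ (fun u : EuclideanSpace ℝ (Fin 2) => ‖u‖ ^ ρ) t v
      = ρ * ((‖t‖ ^ 2 : ℝ) ^ (ρ/2 - 1) * ⟪v, t⟫) := by
  rw [(aux_grad_norm_rpow ρ t ht).fderiv]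
  simp [real_inner_comm]
  ring

lemma aux_powHess_eq (ρ : ℝ) (s : EuclideanSpace ℝ (Fin 2)) (hs : s ≠ 0) (i j : Fin 2) :
    powHess ρ s i j = ρ * ((‖s‖ ^ 2 : ℝ) ^ (ρ/2 - 2) *
      ((ρ - 2) * s i * s j + ‖s‖ ^ 2 * (if i = j then 1 else 0))) := by
  have hs0 : ‖s‖ ≠ 0 := norm_ne_zero_iff.mpr hs
  have hn : (0:ℝ) < ‖s‖ ^ 2 := by positivity
  have hev : (fun t : EuclideanSpace ℝ (Fin 2) =>
      fderiv ℝ (fun u : EuclideanSpace ℝ (Fin 2) => ‖u‖ ^ ρ) t (EuclideanSpace.single i 1))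
      =ᶠ[nhds s] fun t => ρ * ((‖t‖ ^ 2 : ℝ) ^ (ρ/2 - 1) * ⟪EuclideanSpace.single i (1:ℝ), t⟫) := by
    filter_upwards [IsOpen.mem_nhds isOpen_compl_singleton hs] with t ht
    exact aux_fderiv_norm_rpow_apply ρ t ht _
  unfold powHess
  rw [hev.fderiv_eq]
  have hc : HasFDerivAt (fun t : EuclideanSpace ℝ (Fin 2) => (‖t‖ ^ 2 : ℝ) ^ (ρ/2 - 1))
      ((((ρ/2 - 1)) * ((‖s‖ ^ 2 : ℝ)) ^ (ρ/2 - 1 - 1)) • (2 • innerSL ℝ s)) s :=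
    (hasStrictFDerivAt_norm_sq s).hasFDerivAt.rpow_const (Or.inl (ne_of_gt hn))
  have hl : HasFDerivAt (fun t : EuclideanSpace ℝ (Fin 2) => ⟪EuclideanSpace.single i (1:ℝ), t⟫)
      (innerSL ℝ (EuclideanSpace.single i (1:ℝ))) s :=
    (innerSL ℝ (EuclideanSpace.single i (1:ℝ))).hasFDerivAt
  have htot := ((hc.mul hl).const_mul ρ).fderiv
  simp only [Pi.mul_apply] at htot
  rw [htot]
  have h1 : ⟪EuclideanSpace.single i (1:ℝ), s⟫ = s i := by
    simp [EuclideanSpace.inner_single_left]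
  have h2 : ⟪s, EuclideanSpace.single j (1:ℝ)⟫ = s j := by
    simp [EuclideanSpace.inner_single_right]
  have h3 : ⟪EuclideanSpace.single i (1:ℝ), EuclideanSpace.single j (1:ℝ)⟫
      = (if i = j then (1:ℝ) else 0) := by
    simp [EuclideanSpace.inner_single_left, EuclideanSpace.single_apply]
  simp only [ContinuousLinearMap.smul_apply, ContinuousLinearMap.add_apply,
    ContinuousLinearMap.coe_smul', Pi.smul_apply, innerSL_apply_apply, smul_eq_mul,
    ContinuousLinearMap.smul_apply]
  rw [h1, h2, h3]
  have e1 : (‖s‖ ^ 2 : ℝ) ^ (ρ/2 - 1) = (‖s‖ ^ 2 : ℝ) ^ (ρ/2 - 2) * ‖s‖ ^ 2 := by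
    rw [show ρ/2 - 1 = (ρ/2 - 2) + 1 by ring, Real.rpow_add hn, Real.rpow_one]
  have e2 : ρ/2 - 1 - 1 = ρ/2 - 2 := by ring
  rw [e2, e1]
  ring

section Aux

variable {H : Type*} [NormedAddCommGroup H] [InnerProductSpace ℝ H]

lemma aux_HForm_comb (c d : ℝ) (h g : Fin 2 → Fin 2 → ℝ) (Cr Ci : H →L[ℝ] H) (ξ : Fin 2 → H) :
    HForm (fun i j => c * h i j + d * g i j) Cr Ci ξ
      = c * HForm h Cr Ci ξ + d * HForm g Cr Ci ξ := by
  simp only [HForm, add_smul, mul_smul, inner_add_left, real_inner_smul_left]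
  ring

lemma aux_HForm_rank_one (a b : ℝ) (h : Fin 2 → Fin 2 → ℝ) (h00 : h 0 0 = a * a)
    (h01 : h 0 1 = a * b) (h10 : h 1 0 = b * a) (h11 : h 1 1 = b * b)
    (Cr Ci : H →L[ℝ] H) (ξ : Fin 2 → H) :
    HForm h Cr Ci ξ
      = ⟪a • ξ 0 + b • ξ 1, Cr (a • ξ 0 + b • ξ 1)⟫
        + ⟪a • ξ 0 + b • ξ 1, Ci (b • ξ 0 - a • ξ 1)⟫ := by
  simp only [HForm, h00, h01, h10, h11, map_add, map_sub, map_smul, inner_add_left,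
    inner_add_right, inner_sub_left, inner_sub_right, real_inner_smul_left,
    real_inner_smul_right]
  ring

lemma aux_num_key (t cθ sθ a b C : ℝ) (ht : 0 ≤ t) (hc0 : 0 ≤ cθ) (hs0 : 0 ≤ sθ)
    (hpy : sθ^2 + cθ^2 = 1) (hC : |C| ≤ a*b + t/2*(a^2+b^2)) :
    cθ * a^2 + sθ * C ≤ (1+t) * (a^2+b^2) := by
  have hs1 : sθ ≤ 1 := by nlinarith
  have hc1 : cθ ≤ 1 := by nlinarith
  have h1 : sθ * C ≤ sθ * (a*b + t/2*(a^2+b^2)) := by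
    have := (abs_le.mp hC).2
    nlinarith [abs_nonneg C, le_abs_self C]
  have h2 : (1-cθ)*a^2 - 2*sθ*(a*b) + (1+cθ)*b^2 ≥ 0 := by
    nlinarith [sq_nonneg (sθ*a - (1+cθ)*b), sq_nonneg a, sq_nonneg b]
  nlinarith [sq_nonneg a, sq_nonneg b, mul_nonneg ht (sq_nonneg a), mul_nonneg ht (sq_nonneg b)]

end Aux

section Aux2

variable {H : Type*} [NormedAddCommGroup H] [InnerProductSpace ℝ H] [CompleteSpace H]

lemma aux_sym_S (B S : H →L[ℝ] H) (hSsa : IsSelfAdjoint S)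
    (hSsq : S ∘L S = (1/2 : ℝ) • (B + adjoint B)) (x y : H) :
    2 * ⟪S x, S y⟫ = ⟪B x, y⟫ + ⟪B y, x⟫ := by
  have h1 : ⟪S x, S y⟫ = ⟪S (S x), y⟫ := by
    rw [← adjoint_inner_left S y (S x), hSsa.adjoint_eq]
  have h2 : S (S x) = (1/2 : ℝ) • (B x + adjoint B x) := by
    have := congrFun (congrArg DFunLike.coe hSsq) x
    simpa using this
  rw [h1, h2, real_inner_smul_left, inner_add_left, adjoint_inner_left,
    real_inner_comm x (B y)]
  ring

lemma aux_quad_S (B S : H →L[ℝ] H) (hSsa : IsSelfAdjoint S)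
    (hSsq : S ∘L S = (1/2 : ℝ) • (B + adjoint B)) (x : H) :
    ⟪B x, x⟫ = ‖S x‖ ^ 2 := by
  have := aux_sym_S B S hSsa hSsq x x
  rw [real_inner_self_eq_norm_sq] at this
  linarith

lemma aux_cross_S (B S : H →L[ℝ] H) (t : ℝ)
    (hθ2 : ∀ ξ₁ ξ₂ : H, |⟪B ξ₁, ξ₂⟫ - ⟪B ξ₂, ξ₁⟫| ≤ t * (⟪B ξ₁, ξ₁⟫ + ⟪B ξ₂, ξ₂⟫))
    (hSsa : IsSelfAdjoint S)
    (hSsq : S ∘L S = (1/2 : ℝ) • (B + adjoint B)) (x y : H) :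
    |⟪x, B y⟫| ≤ ‖S x‖ * ‖S y‖ + t/2 * (‖S x‖^2 + ‖S y‖^2)
      ∧ |⟪x, adjoint B y⟫| ≤ ‖S x‖ * ‖S y‖ + t/2 * (‖S x‖^2 + ‖S y‖^2) := by
  have hsym := aux_sym_S B S hSsa hSsq x y
  have hq1 := aux_quad_S B S hSsa hSsq x
  have hq2 := aux_quad_S B S hSsa hSsq y
  have hD := hθ2 x y
  rw [hq1, hq2] at hD
  have hCS : |⟪S x, S y⟫| ≤ ‖S x‖ * ‖S y‖ := abs_real_inner_le_norm _ _
  have habs2 : |(⟪B x, y⟫ - ⟪B y, x⟫)/2| = |⟪B x, y⟫ - ⟪B y, x⟫|/2 := by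
    rw [abs_div]; norm_num
  constructor
  · have h1 : ⟪x, B y⟫ = ⟪B y, x⟫ := real_inner_comm _ _
    rw [h1]
    have : ⟪B y, x⟫ = ⟪S x, S y⟫ - (⟪B x, y⟫ - ⟪B y, x⟫)/2 := by linarith
    rw [this]
    calc |⟪S x, S y⟫ - (⟪B x, y⟫ - ⟪B y, x⟫)/2|
        ≤ |⟪S x, S y⟫| + |⟪B x, y⟫ - ⟪B y, x⟫|/2 := by
          rw [sub_eq_add_neg]
          refine (abs_add_le _ _).trans ?_
          rw [abs_neg, habs2]
      _ ≤ ‖S x‖ * ‖S y‖ + t/2 * (‖S x‖^2 + ‖S y‖^2) := by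
          have h2 : |⟪B x, y⟫ - ⟪B y, x⟫| ≤ t * (‖S x‖^2 + ‖S y‖^2) := hD
          linarith
  · have h1 : ⟪x, adjoint B y⟫ = ⟪B x, y⟫ := adjoint_inner_right B x y
    rw [h1]
    have : ⟪B x, y⟫ = ⟪S x, S y⟫ + (⟪B x, y⟫ - ⟪B y, x⟫)/2 := by linarith
    rw [this]
    calc |⟪S x, S y⟫ + (⟪B x, y⟫ - ⟪B y, x⟫)/2|
        ≤ |⟪S x, S y⟫| + |⟪B x, y⟫ - ⟪B y, x⟫|/2 := by
          refine (abs_add_le _ _).trans ?_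
          rw [habs2]
      _ ≤ ‖S x‖ * ‖S y‖ + t/2 * (‖S x‖^2 + ‖S y‖^2) := by
          have h2 : |⟪B x, y⟫ - ⟪B y, x⟫| ≤ t * (‖S x‖^2 + ‖S y‖^2) := hD
          linarith

end Aux2

set_option maxHeartbeats 1000000 in
theorem stmt_19 {H : Type*} [NormedAddCommGroup H] [InnerProductSpace ℝ H] [CompleteSpace H]
    (B S : H →L[ℝ] H) (lam : ℝ) (hlam : 0 < lam)
    (hacc : ∀ ξ : H, lam * ‖ξ‖^2 ≤ ⟪B ξ, ξ⟫)
    -- `θ2s` is the smallest angle bounding the numerical range of the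
    -- complexification of `B`: for `ξ̃ = ξ₁ + iξ₂` one has
    -- `Re⟨Bξ̃,ξ̃⟩ = ⟨Bξ₁,ξ₁⟩ + ⟨Bξ₂,ξ₂⟩` and `|Im⟨Bξ̃,ξ̃⟩| = |⟨Bξ₁,ξ₂⟩ - ⟨Bξ₂,ξ₁⟩|`
    (θ2s : ℝ) (hθmem : θ2s ∈ Set.Ico 0 (π/2))
    (hθ2 : ∀ ξ₁ ξ₂ : H, |⟪B ξ₁, ξ₂⟫ - ⟪B ξ₂, ξ₁⟫| ≤ tan θ2s * (⟪B ξ₁, ξ₁⟫ + ⟪B ξ₂, ξ₂⟫))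
    (hmin : ∀ θ' ∈ Set.Ico (0:ℝ) (π/2),
      (∀ ξ₁ ξ₂ : H, |⟪B ξ₁, ξ₂⟫ - ⟪B ξ₂, ξ₁⟫| ≤ tan θ' * (⟪B ξ₁, ξ₁⟫ + ⟪B ξ₂, ξ₂⟫))
        → θ2s ≤ θ')
    -- `S` is the positive square root of `B_s = (B+B^*)/2`
    (hSsa : IsSelfAdjoint S) (hSpos : ∀ ξ : H, 0 ≤ ⟪S ξ, ξ⟫)
    (hSsq : S ∘L S = (1/2 : ℝ) • (B + adjoint B))
    (r : ℝ) (hr1 : 1 < r) (hr2 : r < 2)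
    (θ : ℝ) (hθ0 : 0 ≤ θ)
    (hθr : θ ≤ π/2 - arctan (Real.sqrt ((r-2)^2 + r^2 * (tan θ2s)^2) / (2 * Real.sqrt (r-1))))
    -- `C ∈ {e^{iθ}B, e^{-iθ}B, e^{iθ}B^*, e^{-iθ}B^*}`, described by its
    -- real part `Cr` and imaginary part `Ci`
    (Cr Ci : H →L[ℝ] H)
    (hC : (Cr, Ci) ∈
      ({(cos θ • B, sin θ • B), (cos θ • B, -(sin θ • B)),
        (cos θ • adjoint B, sin θ • adjoint B),
        (cos θ • adjoint B, -(sin θ • adjoint B))} :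
          Set ((H →L[ℝ] H) × (H →L[ℝ] H))))
    (s : EuclideanSpace ℝ (Fin 2)) (hs : s ≠ 0) (ξ : Fin 2 → H)
    (hpos : 0 ≤ HForm (powHess r s) Cr Ci ξ) :
    -2 * (r - 1) * (1 + tan θ2s) * ‖s‖ ^ (-r) * (‖S (ξ 0)‖^2 + ‖S (ξ 1)‖^2)
      ≤ HForm (powHess (2 - r) s) Cr Ci ξ := by
  obtain ⟨hθ2s0, hθ2s1⟩ := hθmem
  have ht : 0 ≤ tan θ2s := tan_nonneg_of_nonneg_of_le_pi_div_two hθ2s0 hθ2s1.le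
  have harc : 0 ≤ arctan (Real.sqrt ((r-2)^2 + r^2 * (tan θ2s)^2) / (2 * Real.sqrt (r-1))) := by
    rw [← Real.arctan_zero]
    exact Real.arctan_strictMono.monotone (by positivity)
  have hθhalf : θ ≤ π/2 := by linarith
  have hsθ : 0 ≤ sin θ := sin_nonneg_of_nonneg_of_le_pi hθ0 (by linarith [pi_pos])
  have hcθ : 0 ≤ cos θ := cos_nonneg_of_mem_Icc ⟨by linarith [pi_pos], hθhalf⟩
  have hpy : sin θ^2 + cos θ^2 = 1 := sin_sq_add_cos_sq θ
  have hs0 : ‖s‖ ≠ 0 := norm_ne_zero_iff.mpr hs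
  have hn : (0:ℝ) < ‖s‖^2 := by positivity
  have hn2 : ⟪s, s⟫ = s 0^2 + s 1^2 := by
    simp [PiLp.inner_apply, Fin.sum_univ_two]
    rw [EuclideanSpace.norm_eq, Real.sq_sqrt (by positivity), Fin.sum_univ_two]; simp
  set η := s 0 • ξ 0 + s 1 • ξ 1 with hη
  set ζ := s 1 • ξ 0 - s 0 • ξ 1 with hζ
  have hr0 : (r:ℝ) ≠ 0 := by linarith
  -- decomposition of the Hessian
  have hdec : powHess (2-r) s
      = fun i j => ((2-r)/r * (‖s‖^2 : ℝ) ^ (1-r)) * powHess r s i j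
        + (-(2*(r-1)*(2-r) * (‖s‖^2 : ℝ) ^ (-r/2-1))) * (s i * s j) := by
    funext i j
    rw [aux_powHess_eq _ s hs, aux_powHess_eq _ s hs]
    have e1 : (‖s‖^2 : ℝ) ^ ((2-r)/2 - 2) = (‖s‖^2 : ℝ) ^ (1-r) * (‖s‖^2 : ℝ) ^ (r/2-2) := by
      rw [← Real.rpow_add hn]; congr 1; ring
    have e2 : (‖s‖^2 : ℝ) ^ (-r/2-1) = (‖s‖^2 : ℝ) ^ (1-r) * (‖s‖^2 : ℝ) ^ (r/2-2) := by
      rw [← Real.rpow_add hn]; congr 1; ring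
    rw [e1, e2]
    field_simp
    ring
  have hrank := aux_HForm_rank_one (s 0) (s 1) (fun i j => s i * s j)
    rfl rfl rfl rfl Cr Ci ξ
  have hHdec : HForm (powHess (2-r) s) Cr Ci ξ
      = ((2-r)/r * (‖s‖^2 : ℝ) ^ (1-r)) * HForm (powHess r s) Cr Ci ξ
        + (-(2*(r-1)*(2-r) * (‖s‖^2 : ℝ) ^ (-r/2-1)))
          * (⟪η, Cr η⟫ + ⟪η, Ci ζ⟫) := by
    rw [hdec, aux_HForm_comb, hrank]
  -- bound on the rank-one term
  have hRbound : ⟪η, Cr η⟫ + ⟪η, Ci ζ⟫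
      ≤ (1 + tan θ2s) * (‖S η‖^2 + ‖S ζ‖^2) := by
    have hq := aux_quad_S B S hSsa hSsq η
    have hqa : ⟪η, B η⟫ = ‖S η‖^2 := by rw [real_inner_comm]; exact hq
    have hqa' : ⟪η, adjoint B η⟫ = ‖S η‖^2 := by rw [adjoint_inner_right]; exact hq
    have hcr := aux_cross_S B S (tan θ2s) hθ2 hSsa hSsq η ζ
    simp only [Set.mem_insert_iff, Set.mem_singleton_iff, Prod.mk.injEq] at hC
    rcases hC with ⟨h1, h2⟩ | ⟨h1, h2⟩ | ⟨h1, h2⟩ | ⟨h1, h2⟩ <;> subst h1 <;> subst h2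
    · simp only [ContinuousLinearMap.smul_apply, real_inner_smul_right]
      rw [hqa]
      exact aux_num_key _ _ _ _ _ _ ht hcθ hsθ hpy hcr.1
    · simp only [ContinuousLinearMap.neg_apply, ContinuousLinearMap.smul_apply,
        real_inner_smul_right, inner_neg_right]
      rw [hqa, show cos θ * ‖S η‖^2 + -(sin θ * ⟪η, B ζ⟫)
        = cos θ * ‖S η‖^2 + sin θ * (-⟪η, B ζ⟫) by ring]
      exact aux_num_key _ _ _ _ _ _ ht hcθ hsθ hpy (by rw [abs_neg]; exact hcr.1)
    · simp only [ContinuousLinearMap.smul_apply, real_inner_smul_right]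
      rw [hqa']
      exact aux_num_key _ _ _ _ _ _ ht hcθ hsθ hpy hcr.2
    · simp only [ContinuousLinearMap.neg_apply, ContinuousLinearMap.smul_apply,
        real_inner_smul_right, inner_neg_right]
      rw [hqa', show cos θ * ‖S η‖^2 + -(sin θ * ⟪η, adjoint B ζ⟫)
        = cos θ * ‖S η‖^2 + sin θ * (-⟪η, adjoint B ζ⟫) by ring]
      exact aux_num_key _ _ _ _ _ _ ht hcθ hsθ hpy (by rw [abs_neg]; exact hcr.2)
  -- norms
  have hSη : S η = s 0 • S (ξ 0) + s 1 • S (ξ 1) := by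
    rw [hη]; simp [map_add, map_smul]
  have hSζ : S ζ = s 1 • S (ξ 0) - s 0 • S (ξ 1) := by
    rw [hζ]; simp [map_sub, map_smul]
  have hnorm : ‖S η‖^2 + ‖S ζ‖^2 = (‖s‖^2) * (‖S (ξ 0)‖^2 + ‖S (ξ 1)‖^2) := by
    rw [hSη, hSζ]
    simp only [← real_inner_self_eq_norm_sq]
    rw [hn2]
    simp only [inner_add_left, inner_add_right, inner_sub_left, inner_sub_right,
      real_inner_smul_left, real_inner_smul_right]
    rw [real_inner_comm (S (ξ 1)) (S (ξ 0))]
    ring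
  -- positivity facts
  have hlam0 : 0 ≤ (2-r)/r * (‖s‖^2 : ℝ) ^ (1-r) :=
    mul_nonneg (div_nonneg (by linarith) (by linarith)) (Real.rpow_nonneg hn.le _)
  have hmu0 : 0 ≤ 2*(r-1)*(2-r) * (‖s‖^2 : ℝ) ^ (-r/2-1) :=
    mul_nonneg (by nlinarith) (Real.rpow_nonneg hn.le _)
  have hpowr : (‖s‖^2 : ℝ) ^ (-r/2-1) * ‖s‖^2 = ‖s‖ ^ (-r) := by
    have h1 : (‖s‖^2 : ℝ) ^ (-r/2-1) * ‖s‖^2 = (‖s‖^2 : ℝ) ^ (-r/2) := by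
      rw [← Real.rpow_add_one (ne_of_gt hn)]
      congr 1; ring
    rw [h1, ← Real.rpow_natCast ‖s‖ 2, ← Real.rpow_mul (norm_nonneg s)]
    congr 1; push_cast; ring
  have hpos2 : 0 ≤ ((2-r)/r * (‖s‖^2 : ℝ) ^ (1-r)) * HForm (powHess r s) Cr Ci ξ :=
    mul_nonneg hlam0 hpos
  have h3 : (2*(r-1)*(2-r) * (‖s‖^2 : ℝ) ^ (-r/2-1)) * (⟪η, Cr η⟫ + ⟪η, Ci ζ⟫)
      ≤ 2*(r-1)*(2-r)*(1 + tan θ2s)*(‖s‖ ^ (-r))*(‖S (ξ 0)‖^2 + ‖S (ξ 1)‖^2) := by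
    calc (2*(r-1)*(2-r) * (‖s‖^2 : ℝ) ^ (-r/2-1)) * (⟪η, Cr η⟫ + ⟪η, Ci ζ⟫)
        ≤ (2*(r-1)*(2-r) * (‖s‖^2 : ℝ) ^ (-r/2-1))
            * ((1 + tan θ2s) * (‖S η‖^2 + ‖S ζ‖^2)) :=
          mul_le_mul_of_nonneg_left hRbound hmu0
      _ = 2*(r-1)*(2-r)*(1 + tan θ2s)*(‖s‖ ^ (-r))*(‖S (ξ 0)‖^2 + ‖S (ξ 1)‖^2) := by
          rw [hnorm, ← hpowr]; ring
  have hZ : 0 ≤ (1 + tan θ2s)*(‖s‖ ^ (-r))*(‖S (ξ 0)‖^2 + ‖S (ξ 1)‖^2) :=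
    mul_nonneg (mul_nonneg (by linarith) (Real.rpow_nonneg (norm_nonneg s) _)) (by positivity)
  have h4 : 2*(r-1)*(2-r)*(1 + tan θ2s)*(‖s‖ ^ (-r))*(‖S (ξ 0)‖^2 + ‖S (ξ 1)‖^2)
      ≤ 2*(r-1)*(1 + tan θ2s)*(‖s‖ ^ (-r))*(‖S (ξ 0)‖^2 + ‖S (ξ 1)‖^2) := by
    nlinarith [mul_nonneg hZ (sq_nonneg (r-1))]
  rw [hHdec]
  linarith [hpos2, h3, h4]
end
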